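/- Let G be a finite connected 2-γ'MB-critical graph with a cut-vertex x such that G − x has exactly two connected components C₁ and C₂. Suppose there exist two distinct universal vertices v₂ and v₃ of C₂ that are both adjacent to x in G, and that no universal vertex of C₁ is adjacent to x in G. Then G is isomorphic to a graph in the family 𝓕 ∪ 𝓕'. -/

import Mathlib

/-- `D` is a dominating set of `G`: every vertex not in `D` has a neighbor in `D`. -/
def Dominating {V : Type*} (G : SimpleGraph V) (D : Set V) : Prop :=
  ∀ v, v ∉ D → ∃ d ∈ D, G.Adj d v

/-- Dominator wins the S-game on `G` within one move. -/
def WinsWithin1 {V : Type*} (G : SimpleGraph V) : Prop :=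
  ∀ s₁ : V, ∃ d₁, d₁ ≠ s₁ ∧ Dominating G {d₁}

/-- Dominator wins the S-game on `G` within two moves. -/
def WinsWithin2 {V : Type*} (G : SimpleGraph V) : Prop :=
  ∀ s₁ : V, ∃ d₁, d₁ ≠ s₁ ∧
    (Dominating G {d₁} ∨
      ∀ s₂, s₂ ∉ ({s₁, d₁} : Set V) →
        ∃ d₂, d₂ ∉ ({s₁, d₁, s₂} : Set V) ∧ Dominating G {d₁, d₂})

/-- `γ'MB(G) = 2`: Dominator wins the S-game within two moves but not within one. -/
def MBPrimeEqTwo {V : Type*} (G : SimpleGraph V) : Prop :=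
  WinsWithin2 G ∧ ¬ WinsWithin1 G

/-- `G` is `2`-`γ'MB`-critical: `γ'MB(G) = 2` and for every edge `e`, Dominator does not
win the S-game on `G - e` within two moves. -/
def Critical2 {V : Type*} (G : SimpleGraph V) : Prop :=
  MBPrimeEqTwo G ∧ ∀ u v : V, G.Adj u v → ¬ WinsWithin2 (G.deleteEdges {s(u, v)})

/-- The graph `H_m`, the join of `K₂` with the complement of `K_{m-2}`: the first two
vertices are adjacent to everything, the remaining vertices form an independent set.
(`H₀` is the null graph, `H₂ = K₂`.) -/
def HGraph (m : ℕ) : SimpleGraph (Fin m) :=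
  SimpleGraph.fromRel (fun u _ => u.val < 2)

/-- Vertex type of `F_{m₁,t,m₂}`: a copy of `H_{m₁}`, a copy of `H_{m₂}`, the independent
set `B` of `t` vertices, and the two vertices `v₁ = inr (inr 0)` and `v₂ = inr (inr 1)`. -/
abbrev FVert (m₁ t m₂ : ℕ) : Type := (Fin m₁ ⊕ Fin m₂) ⊕ (Fin t ⊕ Fin 2)

/-- The graph `F_{m₁,t,m₂}`: disjoint copies of `H_{m₁}` and `H_{m₂}`, an independent set
`B` of `t` vertices, and nonadjacent vertices `v₁, v₂`, where `v₁` is joined to `H_{m₁}`,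
`v₂` is joined to `H_{m₂}`, and both `v₁` and `v₂` are joined to all of `B`. -/
def FGraph (m₁ t m₂ : ℕ) : SimpleGraph (FVert m₁ t m₂) :=
  SimpleGraph.fromRel (fun u v =>
    match u, v with
    | .inl (.inl a), .inl (.inl _) => a.val < 2   -- inside H_{m₁}
    | .inl (.inr a), .inl (.inr _) => a.val < 2   -- inside H_{m₂}
    | .inr (.inr i), .inl (.inl _) => i = 0       -- v₁ to H_{m₁}
    | .inr (.inr i), .inl (.inr _) => i = 1       -- v₂ to H_{m₂}
    | .inr (.inr _), .inr (.inl _) => True        -- v₁, v₂ to B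
    | _, _ => False)

/-- The conditions on the parameters of `F_{m₁,t,m₂}`. -/
def FCond (m₁ t m₂ : ℕ) : Prop :=
  (m₁ = 0 ∨ 2 ≤ m₁) ∧ m₁ ≤ m₂ ∧ 2 ≤ m₂ ∧ 1 ≤ t ∧ (m₁ = 0 → 2 ≤ t)

/-- Vertex type of `F'_{s,q,m}`: the part `{a, b}` of `K_{2,s}` (`a = inl (inl 0)`,
`b = inl (inl 1)`), the `s`-part of `K_{2,s}`, the `q - 2` vertices `b₁, …, b_{q-2}`,
the vertex `v₁ = inr (inl ())`, the copy of `H_m`, and the vertex `x = inr (inr (inr ()))`. -/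
abbrev F'Vert (s q m : ℕ) : Type :=
  (Fin 2 ⊕ (Fin s ⊕ Fin (q - 2))) ⊕ (Unit ⊕ (Fin m ⊕ Unit))

/-- The graph `F'_{s,q,m}`. -/
def F'Graph (s q m : ℕ) : SimpleGraph (F'Vert s q m) :=
  SimpleGraph.fromRel (fun u v =>
    match u, v with
    | .inl (.inl _), .inl (.inr (.inl _)) => True        -- {a, b} to the s-part
    | .inr (.inl _), .inl _ => True                      -- v₁ to all of P
    | .inr (.inr (.inl h)), .inr (.inr (.inl _)) => h.val < 2  -- inside H_m
    | .inr (.inr (.inr _)), .inr (.inr (.inl _)) => True -- x to H_m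
    | .inr (.inr (.inr _)), .inl (.inl _) => True        -- x to {a, b}
    | .inr (.inr (.inr _)), .inl (.inr (.inr _)) => True -- x to the bᵢ's
    | _, _ => False)

/-- `G` is isomorphic to a member of the family `𝓕 ∪ 𝓕'`. -/
def InFamilyFF' {V : Type*} (G : SimpleGraph V) : Prop :=
  (∃ m₁ t m₂ : ℕ, FCond m₁ t m₂ ∧ Nonempty (G ≃g FGraph m₁ t m₂)) ∨
  (∃ s q m : ℕ, 2 ≤ s ∧ 2 ≤ q ∧ 2 ≤ m ∧ Nonempty (G ≃g F'Graph s q m))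

/-- `v` is a universal vertex of the subgraph of `G` induced on `C`:
`v ∈ C` and `v` is adjacent in `G` to every other vertex of `C`. -/
def UnivIn {V : Type*} (G : SimpleGraph V) (C : Set V) (v : V) : Prop :=
  v ∈ C ∧ ∀ u ∈ C, u ≠ v → G.Adj v u

/-- `G - x` has exactly two connected components, with vertex sets `C₁` and `C₂`. -/
def IsTwoComponents {V : Type*} (G : SimpleGraph V) (x : V) (C₁ C₂ : Set V) : Prop :=
  C₁.Nonempty ∧ C₂.Nonempty ∧ Disjoint C₁ C₂ ∧ C₁ ∪ C₂ = {x}ᶜ ∧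
    (G.induce C₁).Connected ∧ (G.induce C₂).Connected ∧
    ∀ u ∈ C₁, ∀ v ∈ C₂, ¬ G.Adj u v

section Wins
variable {V : Type*}

lemma pick2 {a b s : V} (hab : a ≠ b) : ∃ d, (d = a ∨ d = b) ∧ d ≠ s := by
  by_cases h : a = s
  · exact ⟨b, Or.inr rfl, fun hb => hab (h.trans hb.symm)⟩
  · exact ⟨a, Or.inl rfl, h⟩

lemma pick3 {a b c s t : V} (hab : a ≠ b) (hac : a ≠ c) (hbc : b ≠ c) :
    ∃ d, (d = a ∨ d = b ∨ d = c) ∧ d ≠ s ∧ d ≠ t := by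
  by_cases has : a = s
  · subst has
    by_cases hbt : b = t
    · subst hbt
      exact ⟨c, Or.inr (Or.inr rfl), fun h => hac h.symm, fun h => hbc h.symm⟩
    · exact ⟨b, Or.inr (Or.inl rfl), fun h => hab h.symm, hbt⟩
  · by_cases hat : a = t
    · subst hat
      by_cases hbs : b = s
      · subst hbs
        exact ⟨c, Or.inr (Or.inr rfl), fun h => hbc h.symm, fun h => hac h.symm⟩
      · exact ⟨b, Or.inr (Or.inl rfl), hbs, fun h => hab h.symm⟩
    · exact ⟨a, Or.inl rfl, has, hat⟩

lemma dom_pair_of {G : SimpleGraph V} {p q : V}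
    (h : ∀ v, v ≠ p → v ≠ q → G.Adj p v ∨ G.Adj q v) : Dominating G {p, q} := by
  intro v hv
  simp only [Set.mem_insert_iff, Set.mem_singleton_iff, not_or] at hv
  rcases h v hv.1 hv.2 with h' | h'
  · exact ⟨p, by simp, h'⟩
  · exact ⟨q, by simp, h'⟩

lemma dom_pair_elim {G : SimpleGraph V} {p q : V} (h : Dominating G {p, q})
    {v : V} (hv1 : v ≠ p) (hv2 : v ≠ q) : G.Adj p v ∨ G.Adj q v := by
  obtain ⟨d, hd, hadj⟩ := h v (by simp [hv1, hv2])
  simp only [Set.mem_insert_iff, Set.mem_singleton_iff] at hd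
  rcases hd with rfl | rfl
  · exact Or.inl hadj
  · exact Or.inr hadj

lemma dom_pair_comm {G : SimpleGraph V} {p q : V} (h : Dominating G {p, q}) :
    Dominating G {q, p} := by rwa [Set.pair_comm]

lemma notmem_pair {a b c : V} (h1 : a ≠ b) (h2 : a ≠ c) : a ∉ ({b, c} : Set V) := by
  simp [h1, h2]

lemma notmem_triple {a b c d : V} (h1 : a ≠ b) (h2 : a ≠ c) (h3 : a ≠ d) :
    a ∉ ({b, c, d} : Set V) := by simp [h1, h2, h3]

/-- Generic win-within-2 builder used with `v₁` and `x`. -/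
lemma wins2_of (G' : SimpleGraph V) (v₁ x w₁ w₂ r₁ r₂ : V)
    (hvx : v₁ ≠ x) (hw : w₁ ≠ w₂) (hr : r₁ ≠ r₂)
    (hvw₁ : v₁ ≠ w₁) (hvw₂ : v₁ ≠ w₂) (hxw₁ : x ≠ w₁) (hxw₂ : x ≠ w₂)
    (hvr₁ : v₁ ≠ r₁) (hvr₂ : v₁ ≠ r₂) (hxr₁ : x ≠ r₁) (hxr₂ : x ≠ r₂)
    (d1 : Dominating G' {v₁, w₁}) (d2 : Dominating G' {v₁, w₂})
    (d3 : Dominating G' {v₁, x})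
    (d4 : Dominating G' {x, r₁}) (d5 : Dominating G' {x, r₂}) : WinsWithin2 G' := by
  classical
  intro s₁
  by_cases hs : s₁ = v₁
  · subst hs
    refine ⟨x, fun h => hvx h.symm, Or.inr ?_⟩
    intro s₂ _
    obtain ⟨d₂, hd₂, hd₂s⟩ := pick2 (s := s₂) hr
    have hdv : d₂ ≠ s₁ := by
      rcases hd₂ with rfl | rfl
      · exact fun h => hvr₁ h.symm
      · exact fun h => hvr₂ h.symm
    have hdx : d₂ ≠ x := by
      rcases hd₂ with rfl | rfl
      · exact fun h => hxr₁ h.symm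
      · exact fun h => hxr₂ h.symm
    refine ⟨d₂, notmem_triple hdv hdx hd₂s, ?_⟩
    rcases hd₂ with rfl | rfl
    · exact d4
    · exact d5
  · refine ⟨v₁, fun h => hs h.symm, Or.inr ?_⟩
    intro s₂ _
    obtain ⟨d₂, hd₂, hd₂s₁, hd₂s₂⟩ := pick3 (s := s₁) (t := s₂) hxw₁ hxw₂ hw
    have hdv : d₂ ≠ v₁ := by
      rcases hd₂ with rfl | rfl | rfl
      · exact fun h => hvx h.symm
      · exact fun h => hvw₁ h.symm
      · exact fun h => hvw₂ h.symm
    refine ⟨d₂, notmem_triple hd₂s₁ hdv hd₂s₂, ?_⟩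
    rcases hd₂ with rfl | rfl | rfl
    · exact d3
    · exact d1
    · exact d2

/-- Generic win-within-2 builder from a `2 × 2` grid of dominating pairs. -/
lemma wins2_of' (G' : SimpleGraph V) (p₁ p₂ w₁ w₂ : V)
    (hp : p₁ ≠ p₂) (hw : w₁ ≠ w₂)
    (h11 : p₁ ≠ w₁) (h12 : p₁ ≠ w₂) (h21 : p₂ ≠ w₁) (h22 : p₂ ≠ w₂)
    (d11 : Dominating G' {p₁, w₁}) (d12 : Dominating G' {p₁, w₂})
    (d21 : Dominating G' {p₂, w₁}) (d22 : Dominating G' {p₂, w₂}) :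
    WinsWithin2 G' := by
  classical
  intro s₁
  by_cases hs : s₁ = w₁ ∨ s₁ = w₂
  · obtain ⟨w, hwmem, hws⟩ := pick2 (s := s₁) hw
    refine ⟨w, hws, Or.inr ?_⟩
    intro s₂ _
    obtain ⟨p, hpmem, hps⟩ := pick2 (s := s₂) hp
    have hpw : p ≠ w := by
      rcases hpmem with rfl | rfl <;> rcases hwmem with rfl | rfl
      · exact h11
      · exact h12
      · exact h21
      · exact h22
    have hps₁ : p ≠ s₁ := by
      rcases hpmem with rfl | rfl <;> rcases hs with rfl | rfl
      · exact h11
      · exact h12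
      · exact h21
      · exact h22
    refine ⟨p, notmem_triple hps₁ hpw hps, ?_⟩
    rcases hpmem with rfl | rfl <;> rcases hwmem with rfl | rfl
    · exact dom_pair_comm d11
    · exact dom_pair_comm d12
    · exact dom_pair_comm d21
    · exact dom_pair_comm d22
  · push_neg at hs
    obtain ⟨p, hpmem, hps⟩ := pick2 (s := s₁) hp
    refine ⟨p, hps, Or.inr ?_⟩
    intro s₂ _
    obtain ⟨w, hwmem, hws⟩ := pick2 (s := s₂) hw
    have hwp : w ≠ p := by
      rcases hpmem with rfl | rfl <;> rcases hwmem with rfl | rfl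
      · exact h11.symm
      · exact h12.symm
      · exact h21.symm
      · exact h22.symm
    have hws₁ : w ≠ s₁ := by
      rcases hwmem with rfl | rfl
      · exact fun h => hs.1 h.symm
      · exact fun h => hs.2 h.symm
    refine ⟨w, notmem_triple hws₁ hwp hws, ?_⟩
    rcases hpmem with rfl | rfl <;> rcases hwmem with rfl | rfl
    · exact d11
    · exact d12
    · exact d21
    · exact d22

end Wins

section Surv
variable {V : Type*} {G : SimpleGraph V}

lemma del_adj {a b u v : V} (h : G.Adj u v) (hne : ¬(u = a ∧ v = b))
    (hne' : ¬(u = b ∧ v = a)) : (G.deleteEdges {s(a, b)}).Adj u v := by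
  rw [SimpleGraph.deleteEdges_adj]
  refine ⟨h, ?_⟩
  simp only [Set.mem_singleton_iff, Sym2.eq_iff]
  tauto

lemma del_adj_left {a b u v : V} (h : G.Adj u v) (hu : u ≠ a) (hu' : u ≠ b) :
    (G.deleteEdges {s(a, b)}).Adj u v :=
  del_adj h (fun hh => hu hh.1) (fun hh => hu' hh.1)

/-- `{p, w}` (a universal vertex of `C₁` and one of `C₂` adjacent to `x`) stays
dominating after deleting an edge avoiding `p` and `w`. -/
lemma surv_pw {x : V} {C₁ C₂ : Set V}
    (htri : ∀ v, v = x ∨ v ∈ C₁ ∨ v ∈ C₂)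
    {p w a b : V} (hp : UnivIn G C₁ p) (hw : UnivIn G C₂ w) (hwx : G.Adj w x)
    (hpa : p ≠ a) (hpb : p ≠ b) (hwa : w ≠ a) (hwb : w ≠ b) :
    Dominating (G.deleteEdges {s(a, b)}) {p, w} := by
  apply dom_pair_of
  intro v hvp hvw
  rcases htri v with rfl | hv | hv
  · exact Or.inr (del_adj_left hwx hwa hwb)
  · exact Or.inl (del_adj_left (hp.2 v hv hvp) hpa hpb)
  · exact Or.inr (del_adj_left (hw.2 v hv hvw) hwa hwb)

/-- `{x, q}` stays dominating after deleting an edge `ab` not incident to `x`,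
provided matters are arranged when `q ∈ {a, b}`. -/
lemma surv_xq_C1 {x q a b : V} (hq : Dominating G {x, q}) (hax : a ≠ x) (hbx : b ≠ x)
    (hqa : q = a → G.Adj x b) (hqb : q = b → G.Adj x a) :
    Dominating (G.deleteEdges {s(a, b)}) {x, q} := by
  classical
  apply dom_pair_of
  intro v hvx hvq
  rcases dom_pair_elim hq hvx hvq with h | h
  · exact Or.inl (del_adj_left h (fun hh => hax hh.symm) (fun hh => hbx hh.symm))
  · by_cases hqa' : q = a
    · by_cases hvb : v = b
      · exact Or.inl (del_adj_left (hvb ▸ hqa hqa') (fun hh => hax hh.symm)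
          (fun hh => hbx hh.symm))
      · refine Or.inr (del_adj h ?_ ?_)
        · exact fun hh => hvb hh.2
        · exact fun hh => hvq (hh.2.trans hqa'.symm)
    · by_cases hqb' : q = b
      · by_cases hva : v = a
        · exact Or.inl (del_adj_left (hva ▸ hqb hqb') (fun hh => hax hh.symm)
            (fun hh => hbx hh.symm))
        · refine Or.inr (del_adj h ?_ ?_)
          · exact fun hh => hqa' hh.1
          · exact fun hh => hva hh.2
      · refine Or.inr (del_adj h (fun hh => hqa' hh.1) (fun hh => hqb' hh.1))

/-- `{x, q}` stays dominating after deleting `xc` when `q` is adjacent to `c`. -/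
lemma surv_xq_xc {x q c : V} (hq : Dominating G {x, q}) (hqx : q ≠ x)
    (hcq : c ≠ q) (hadj : G.Adj q c) : Dominating (G.deleteEdges {s(x, c)}) {x, q} := by
  classical
  apply dom_pair_of
  intro v hvx hvq
  rcases dom_pair_elim hq hvx hvq with h | h
  · by_cases hvc : v = c
    · subst hvc
      exact Or.inr (del_adj hadj (fun hh => hqx hh.1) (fun hh => hcq hh.1.symm))
    · refine Or.inl (del_adj h (fun hh => hvc hh.2) (fun hh => hvx hh.2))
  · exact Or.inr (del_adj h (fun hh => hqx hh.1) (fun hh => hvx hh.2))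

/-- `{x, q}` stays dominating after deleting the edge `xq` itself. -/
lemma surv_xq_xq {x q : V} (hq : Dominating G {x, q}) (hqx : q ≠ x) :
    Dominating (G.deleteEdges {s(x, q)}) {x, q} := by
  apply dom_pair_of
  intro v hvx hvq
  rcases dom_pair_elim hq hvx hvq with h | h
  · exact Or.inl (del_adj h (fun hh => hvq hh.2) (fun hh => hvx hh.2))
  · exact Or.inr (del_adj h (fun hh => hqx hh.1) (fun hh => hvx hh.2))

lemma closed_of_walk {A : Set V} (hA : ∀ a ∈ A, ∀ b, G.Adj a b → b ∈ A) :
    ∀ {u v : V} (_ : G.Walk u v), u ∈ A → v ∈ A := by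
  intro u v w
  induction w with
  | nil => exact id
  | cons h p ih => exact fun hu => ih (hA _ hu _ h)

end Surv

/-- Enumerate a finite set `A` having a distinguished 2-element subset `T = {t₁, t₂}`,
so that the first two indices hit `T`. -/
lemma enum_block {V : Type*} [Fintype V] (A T : Set V) (hT : T ⊆ A)
    {t₁ t₂ : V} (ht : t₁ ≠ t₂) (hTeq : T = {t₁, t₂}) :
    ∃ (n : ℕ) (f : Fin (2 + n) → V), Function.Injective f ∧
      (∀ i, f i ∈ A) ∧ (∀ i : Fin (2 + n), ((i : ℕ) < 2 ↔ f i ∈ T)) ∧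
      (∀ v ∈ A, ∃ i, f i = v) ∧ 2 + n = A.ncard := by
  classical
  set D : Set V := A \ T with hD
  haveI : Fintype ↥D := (Set.toFinite D).fintype
  set n : ℕ := Fintype.card ↥D with hn
  set e : ↥D ≃ Fin n := Fintype.equivFin ↥D with he
  have htmem₁ : t₁ ∈ T := by rw [hTeq]; simp
  have htmem₂ : t₂ ∈ T := by rw [hTeq]; simp
  refine ⟨n, fun i => if h : (i : ℕ) < 2 then (if (i : ℕ) = 0 then t₁ else t₂)
    else ((e.symm ⟨(i : ℕ) - 2, by omega⟩ : ↥D) : V), ?_, ?_, ?_, ?_, ?_⟩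
  · -- injective
    intro i j hij
    by_cases hi : (i : ℕ) < 2 <;> by_cases hj : (j : ℕ) < 2 <;>
        simp only [hi, hj, dif_pos, dif_neg, not_false_iff] at hij
    · by_cases hi0 : (i : ℕ) = 0 <;> by_cases hj0 : (j : ℕ) = 0 <;>
          simp only [hi0, hj0, if_pos, if_neg, not_false_iff] at hij ⊢
      · exact Fin.ext (by omega)
      · exact absurd hij ht
      · exact absurd hij.symm ht
      · exact Fin.ext (by omega)
    · exfalso
      have : ((e.symm ⟨(j : ℕ) - 2, by omega⟩ : ↥D) : V) ∈ D := Subtype.mem _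
      rw [← hij] at this
      by_cases hi0 : (i : ℕ) = 0 <;> simp only [hi0, if_pos, if_neg, not_false_iff] at this
      · exact this.2 htmem₁
      · exact this.2 htmem₂
    · exfalso
      have : ((e.symm ⟨(i : ℕ) - 2, by omega⟩ : ↥D) : V) ∈ D := Subtype.mem _
      rw [hij] at this
      by_cases hj0 : (j : ℕ) = 0 <;> simp only [hj0, if_pos, if_neg, not_false_iff] at this
      · exact this.2 htmem₁
      · exact this.2 htmem₂
    · have := e.symm.injective (Subtype.ext hij)
      have : (i : ℕ) - 2 = (j : ℕ) - 2 := congrArg Fin.val this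
      exact Fin.ext (by omega)
  · -- membership
    intro i
    by_cases hi : (i : ℕ) < 2 <;> simp only [hi, dif_pos, dif_neg, not_false_iff]
    · by_cases hi0 : (i : ℕ) = 0 <;> simp only [hi0, if_pos, if_neg, not_false_iff]
      · exact hT htmem₁
      · exact hT htmem₂
    · exact Set.mem_of_mem_diff (Subtype.mem _)
  · -- tops
    intro i
    by_cases hi : (i : ℕ) < 2 <;> simp only [hi, dif_pos, dif_neg, not_false_iff,
      iff_true, iff_false, true_iff, false_iff]
    · by_cases hi0 : (i : ℕ) = 0 <;> simp only [hi0, if_pos, if_neg, not_false_iff]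
      · exact htmem₁
      · exact htmem₂
    · exact Set.notMem_of_mem_diff (Subtype.mem _)
  · -- surjectivity onto A
    intro v hv
    by_cases hvT : v ∈ T
    · rw [hTeq] at hvT
      rcases hvT with rfl | rfl
      · refine ⟨⟨0, by omega⟩, by simp⟩
      · refine ⟨⟨1, by omega⟩, by norm_num⟩
    · have hvD : v ∈ D := ⟨hv, hvT⟩
      refine ⟨⟨(e ⟨v, hvD⟩ : ℕ) + 2, by have := (e ⟨v, hvD⟩).isLt; omega⟩, ?_⟩
      have h2 : ¬ ((e ⟨v, hvD⟩ : ℕ) + 2 < 2) := by omega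
      simp only [h2, dif_neg, not_false_iff]
      have : (⟨(e ⟨v, hvD⟩ : ℕ) + 2 - 2, by omega⟩ : Fin n) = e ⟨v, hvD⟩ :=
        Fin.ext (by simp)
      rw [this, Equiv.symm_apply_apply]
  · -- cardinality
    have hunion : A = T ∪ D := by
      rw [hD, Set.union_diff_cancel hT]
    have hdisj : Disjoint T D := Set.disjoint_sdiff_right
    rw [hunion, Set.ncard_union_eq hdisj (Set.toFinite _) (Set.toFinite _), hTeq,
      Set.ncard_pair ht]
    congr 1
    rw [Set.ncard_eq_toFinset_card', Set.toFinset_card]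

def Phi {V : Type*} (v₁ x : V) (S RD K R W : Set V) (a b : V) : Prop :=
  (a = v₁ ∧ (b ∈ S ∨ b ∈ RD)) ∨ (a = x ∧ (b ∈ S ∨ b ∈ K)) ∨
    (a ∈ R ∧ b ∈ RD) ∨ (a ∈ W ∧ b ∈ K)

set_option maxHeartbeats 2000000 in
lemma iso_F {V : Type*} [Fintype V] (G : SimpleGraph V) (v₁ x : V)
    (S RD K R W : Set V)
    (hvx : v₁ ≠ x)
    (hv₁S : v₁ ∉ S) (hv₁RD : v₁ ∉ RD) (hv₁K : v₁ ∉ K)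
    (hxS : x ∉ S) (hxRD : x ∉ RD) (hxK : x ∉ K)
    (hSRD : Disjoint S RD) (hSK : Disjoint S K) (hRDK : Disjoint RD K)
    (hcov : ∀ v, v = v₁ ∨ v = x ∨ v ∈ S ∨ v ∈ RD ∨ v ∈ K)
    (hRsub : R ⊆ RD) (hWsub : W ⊆ K)
    (hadj : ∀ a b, G.Adj a b ↔
      a ≠ b ∧ (Phi v₁ x S RD K R W a b ∨ Phi v₁ x S RD K R W b a))
    (hRcard : (R = ∅ ∧ RD = ∅) ∨ ∃ r₁ r₂ : V, r₁ ≠ r₂ ∧ R = {r₁, r₂})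
    (hWcard : ∃ w₁ w₂ : V, w₁ ≠ w₂ ∧ W = {w₁, w₂})
    (hSne : S.Nonempty) (hS2 : RD = ∅ → ∃ s₁ s₂, s₁ ∈ S ∧ s₂ ∈ S ∧ s₁ ≠ s₂)
    (hord : RD.ncard ≤ K.ncard) :
    ∃ m₁ t m₂ : ℕ, FCond m₁ t m₂ ∧ Nonempty (G ≃g FGraph m₁ t m₂) := by
  classical
  obtain ⟨m₁, fH, fHinj, fHmem, fHR, fHsurj, hm₁or, hm₁card⟩ :
      ∃ (m₁ : ℕ) (fH : Fin m₁ → V), Function.Injective fH ∧ (∀ i, fH i ∈ RD) ∧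
        (∀ i : Fin m₁, fH i ∈ R ↔ (i : ℕ) < 2) ∧ (∀ v ∈ RD, ∃ i, fH i = v) ∧
        (m₁ = 0 ∨ 2 ≤ m₁) ∧ m₁ = RD.ncard := by
    rcases hRcard with ⟨hR0, hRD0⟩ | ⟨r₁, r₂, hr, hReq⟩
    · exact ⟨0, Fin.elim0, fun i => i.elim0, fun i => i.elim0, fun i => i.elim0,
        fun v hv => by rw [hRD0] at hv; exact hv.elim, Or.inl rfl,
        by rw [hRD0, Set.ncard_empty]⟩
    · obtain ⟨n, f, h1, h2, h3, h4, h5⟩ := enum_block RD R hRsub hr hReq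
      exact ⟨2 + n, f, h1, h2, fun i => (h3 i).symm, h4, Or.inr (by omega), h5⟩
  obtain ⟨m₂, fK, fKinj, fKmem, fKtop, fKsurj, hm₂2, hm₂card⟩ :
      ∃ (m₂ : ℕ) (fK : Fin m₂ → V), Function.Injective fK ∧ (∀ j, fK j ∈ K) ∧
        (∀ j : Fin m₂, fK j ∈ W ↔ (j : ℕ) < 2) ∧ (∀ v ∈ K, ∃ j, fK j = v) ∧
        2 ≤ m₂ ∧ m₂ = K.ncard := by
    obtain ⟨w₁, w₂, hw, hWeq⟩ := hWcard
    obtain ⟨n, f, h1, h2, h3, h4, h5⟩ := enum_block K W hWsub hw hWeq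
    exact ⟨2 + n, f, h1, h2, fun j => (h3 j).symm, h4, by omega, h5⟩
  obtain ⟨t, fB, fBinj, fBmem, fBsurj⟩ :
      ∃ (t : ℕ) (fB : Fin t → V), Function.Injective fB ∧ (∀ k, fB k ∈ S) ∧
        (∀ v ∈ S, ∃ k, fB k = v) := by
    haveI : Fintype ↥S := (Set.toFinite S).fintype
    refine ⟨Fintype.card ↥S, fun k => (((Fintype.equivFin ↥S).symm k : ↥S) : V),
      fun a b h => (Fintype.equivFin ↥S).symm.injective (Subtype.ext h),
      fun k => Subtype.mem _, fun v hv => ⟨Fintype.equivFin ↥S ⟨v, hv⟩,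
        congrArg Subtype.val (Equiv.symm_apply_apply _ _)⟩⟩
  have ht1 : 1 ≤ t := by
    obtain ⟨s, hs⟩ := hSne
    obtain ⟨k, -⟩ := fBsurj s hs
    exact k.pos
  -- basic exclusion facts
  have hHv₁ : ∀ i, ¬ fH i = v₁ := fun i h => hv₁RD (h ▸ fHmem i)
  have hHv₁' : ∀ i, ¬ v₁ = fH i := fun i h => hHv₁ i h.symm
  have hHx : ∀ i, ¬ fH i = x := fun i h => hxRD (h ▸ fHmem i)
  have hHx' : ∀ i, ¬ x = fH i := fun i h => hHx i h.symm
  have hHnS : ∀ i, fH i ∉ S := fun i h => Set.disjoint_left.mp hSRD h (fHmem i)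
  have hHnK : ∀ i, fH i ∉ K := fun i h => Set.disjoint_left.mp hRDK (fHmem i) h
  have hHnW : ∀ i, fH i ∉ W := fun i h => hHnK i (hWsub h)
  have hKv₁ : ∀ j, ¬ fK j = v₁ := fun j h => hv₁K (h ▸ fKmem j)
  have hKv₁' : ∀ j, ¬ v₁ = fK j := fun j h => hKv₁ j h.symm
  have hKx : ∀ j, ¬ fK j = x := fun j h => hxK (h ▸ fKmem j)
  have hKx' : ∀ j, ¬ x = fK j := fun j h => hKx j h.symm
  have hKnS : ∀ j, fK j ∉ S := fun j h => Set.disjoint_left.mp hSK h (fKmem j)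
  have hKnRD : ∀ j, fK j ∉ RD := fun j h => Set.disjoint_left.mp hRDK h (fKmem j)
  have hKnR : ∀ j, fK j ∉ R := fun j h => hKnRD j (hRsub h)
  have hBv₁ : ∀ k, ¬ fB k = v₁ := fun k h => hv₁S (h ▸ fBmem k)
  have hBv₁' : ∀ k, ¬ v₁ = fB k := fun k h => hBv₁ k h.symm
  have hBx : ∀ k, ¬ fB k = x := fun k h => hxS (h ▸ fBmem k)
  have hBx' : ∀ k, ¬ x = fB k := fun k h => hBx k h.symm
  have hBnRD : ∀ k, fB k ∉ RD := fun k h => Set.disjoint_left.mp hSRD (fBmem k) h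
  have hBnK : ∀ k, fB k ∉ K := fun k h => Set.disjoint_left.mp hSK (fBmem k) h
  have hBnR : ∀ k, fB k ∉ R := fun k h => hBnRD k (hRsub h)
  have hBnW : ∀ k, fB k ∉ W := fun k h => hBnK k (hWsub h)
  have hv₁R : v₁ ∉ R := fun h => hv₁RD (hRsub h)
  have hv₁W : v₁ ∉ W := fun h => hv₁K (hWsub h)
  have hxR : x ∉ R := fun h => hxRD (hRsub h)
  have hxW : x ∉ W := fun h => hxK (hWsub h)
  have hxv : ¬ x = v₁ := fun h => hvx h.symm
  -- the bijection, packaged opaquely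
  obtain ⟨g, hgH, hgK, hgB, hg0, hg1, hginj, hgsurj⟩ :
      ∃ g : FVert m₁ t m₂ → V, (∀ i, g (Sum.inl (Sum.inl i)) = fH i) ∧
        (∀ j, g (Sum.inl (Sum.inr j)) = fK j) ∧
        (∀ k, g (Sum.inr (Sum.inl k)) = fB k) ∧
        (∀ c : Fin 2, c = 0 → g (Sum.inr (Sum.inr c)) = v₁) ∧
        (∀ c : Fin 2, c ≠ 0 → g (Sum.inr (Sum.inr c)) = x) ∧
        Function.Injective g ∧ Function.Surjective g := by
    refine ⟨Sum.elim (Sum.elim fH fK) (Sum.elim fB (fun c => if c = 0 then v₁ else x)),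
      fun i => rfl, fun j => rfl, fun k => rfl,
      fun c hc => by simp [hc], fun c hc => by simp [hc], ?_, ?_⟩
    · intro a b h
      rcases a with (i | j) | (k | c) <;> rcases b with (i' | j') | (k' | c') <;>
        simp only [Sum.elim_inl, Sum.elim_inr] at h
      · rw [fHinj h]
      · exact absurd (h ▸ fHmem i) (hKnRD j')
      · exact absurd (h ▸ fHmem i) (hBnRD k')
      · by_cases h0 : c' = 0
        · rw [if_pos h0] at h; exact absurd h (hHv₁ i)
        · rw [if_neg h0] at h; exact absurd h (hHx i)
      · exact absurd (h.symm ▸ fHmem i') (hKnRD j)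
      · rw [fKinj h]
      · exact absurd (h ▸ fKmem j) (hBnK k')
      · by_cases h0 : c' = 0
        · rw [if_pos h0] at h; exact absurd h (hKv₁ j)
        · rw [if_neg h0] at h; exact absurd h (hKx j)
      · exact absurd (h.symm ▸ fHmem i') (hBnRD k)
      · exact absurd (h.symm ▸ fKmem j') (hBnK k)
      · rw [fBinj h]
      · by_cases h0 : c' = 0
        · rw [if_pos h0] at h; exact absurd h (hBv₁ k)
        · rw [if_neg h0] at h; exact absurd h (hBx k)
      · by_cases h0 : c = 0
        · rw [if_pos h0] at h; exact absurd h.symm (hHv₁ i')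
        · rw [if_neg h0] at h; exact absurd h.symm (hHx i')
      · by_cases h0 : c = 0
        · rw [if_pos h0] at h; exact absurd h.symm (hKv₁ j')
        · rw [if_neg h0] at h; exact absurd h.symm (hKx j')
      · by_cases h0 : c = 0
        · rw [if_pos h0] at h; exact absurd h.symm (hBv₁ k')
        · rw [if_neg h0] at h; exact absurd h.symm (hBx k')
      · by_cases h0 : c = 0 <;> by_cases h0' : c' = 0
        · rw [h0, h0']
        · rw [if_pos h0, if_neg h0'] at h; exact absurd h hvx
        · rw [if_neg h0, if_pos h0'] at h; exact absurd h hxv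
        · have hc : c = c' := by
            have h1 : (c : ℕ) ≠ 0 := fun hh => h0 (Fin.ext hh)
            have h2 : (c' : ℕ) ≠ 0 := fun hh => h0' (Fin.ext hh)
            have := c.isLt
            have := c'.isLt
            exact Fin.ext (by omega)
          rw [hc]
    · intro v
      rcases hcov v with rfl | rfl | hv | hv | hv
      · exact ⟨Sum.inr (Sum.inr 0), by simp⟩
      · exact ⟨Sum.inr (Sum.inr 1), by simp⟩
      · obtain ⟨k, hk⟩ := fBsurj v hv; exact ⟨Sum.inr (Sum.inl k), hk⟩
      · obtain ⟨i, hi⟩ := fHsurj v hv; exact ⟨Sum.inl (Sum.inl i), hi⟩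
      · obtain ⟨j, hj⟩ := fKsurj v hv; exact ⟨Sum.inl (Sum.inr j), hj⟩
  -- adjacency transfer
  have phiH : ∀ i (b : V), Phi v₁ x S RD K R W (fH i) b ↔ ((i : ℕ) < 2 ∧ b ∈ RD) := by
    intro i b
    simp only [Phi, hHv₁ i, hHnW i, false_and, or_false, false_or, hHx i, fHR i]
    try tauto
  have phiK : ∀ j (b : V), Phi v₁ x S RD K R W (fK j) b ↔ ((j : ℕ) < 2 ∧ b ∈ K) := by
    intro j b
    simp only [Phi, hKv₁ j, hKnR j, false_and, or_false, false_or, hKx j, fKtop j]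
    try tauto
  have phiB : ∀ k (b : V), Phi v₁ x S RD K R W (fB k) b ↔ False := by
    intro k b
    simp only [Phi, hBv₁ k, hBnR k, hBnW k, hBx k, false_and, or_false, iff_false]
    try tauto
  have phiV : ∀ b : V, Phi v₁ x S RD K R W v₁ b ↔ (b ∈ S ∨ b ∈ RD) := by
    intro b
    simp only [Phi, hv₁R, hv₁W, hvx, false_and, or_false, true_and, and_false]
    try tauto
  have phiX : ∀ b : V, Phi v₁ x S RD K R W x b ↔ (b ∈ S ∨ b ∈ K) := by
    intro b
    simp only [Phi, hxR, hxW, hxv, false_and, or_false, true_and, and_false]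
    try tauto
  have hg0' : g (Sum.inr (Sum.inr 0)) = v₁ := hg0 0 rfl
  have hg1' : g (Sum.inr (Sum.inr 1)) = x := hg1 1 (by decide)
  have hrel : ∀ a b : FVert m₁ t m₂, G.Adj (g a) (g b) ↔ (FGraph m₁ t m₂).Adj a b := by
    intro a b
    rcases a with (i | j) | (k | c) <;> rcases b with (i' | j') | (k' | c')
    · rw [hadj, hgH, hgH]
      simp [FGraph, SimpleGraph.fromRel_adj, phiH, fHmem, fHinj.ne_iff]
    · rw [hadj, hgH, hgK]
      simp [FGraph, SimpleGraph.fromRel_adj, phiH, phiK, hKnRD j', hHnK i]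
    · rw [hadj, hgH, hgB]
      simp [FGraph, SimpleGraph.fromRel_adj, phiH, phiB, hBnRD k']
    · by_cases h0 : c' = 0
      · rw [hadj, hgH, hg0 c' h0, h0]
        simp [FGraph, SimpleGraph.fromRel_adj, phiH, phiV, fHmem, hHv₁, hv₁RD]
      · rw [hadj, hgH, hg1 c' h0, Fin.eq_one_of_ne_zero c' h0]
        simp [FGraph, SimpleGraph.fromRel_adj, phiH, phiX, hHx, hHnS, hHnK, hxRD, Fin.ext_iff, -Fin.val_eq_zero_iff]
    · rw [hadj, hgK, hgH]
      simp [FGraph, SimpleGraph.fromRel_adj, phiH, phiK, hKnRD j, hHnK i']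
    · rw [hadj, hgK, hgK]
      simp [FGraph, SimpleGraph.fromRel_adj, phiK, fKmem, fKinj.ne_iff]
    · rw [hadj, hgK, hgB]
      simp [FGraph, SimpleGraph.fromRel_adj, phiK, phiB, hBnK k']
    · by_cases h0 : c' = 0
      · rw [hadj, hgK, hg0 c' h0, h0]
        simp [FGraph, SimpleGraph.fromRel_adj, phiK, phiV, hKv₁, hKnS, hKnRD, hv₁K, Fin.ext_iff, -Fin.val_eq_zero_iff]
      · rw [hadj, hgK, hg1 c' h0, Fin.eq_one_of_ne_zero c' h0]
        simp [FGraph, SimpleGraph.fromRel_adj, phiK, phiX, fKmem, hKx]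
    · rw [hadj, hgB, hgH]
      simp [FGraph, SimpleGraph.fromRel_adj, phiH, phiB, hBnRD k]
    · rw [hadj, hgB, hgK]
      simp [FGraph, SimpleGraph.fromRel_adj, phiK, phiB, hBnK k]
    · rw [hadj, hgB, hgB]
      simp [FGraph, SimpleGraph.fromRel_adj, phiB]
    · by_cases h0 : c' = 0
      · rw [hadj, hgB, hg0 c' h0, h0]
        simp [FGraph, SimpleGraph.fromRel_adj, phiB, phiV, fBmem, hBv₁]
      · rw [hadj, hgB, hg1 c' h0, Fin.eq_one_of_ne_zero c' h0]
        simp [FGraph, SimpleGraph.fromRel_adj, phiB, phiX, fBmem, hBx]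
    · by_cases h0 : c = 0
      · rw [hadj, hgH, hg0 c h0, h0]
        simp [FGraph, SimpleGraph.fromRel_adj, phiH, phiV, fHmem, hHv₁', hv₁RD]
      · rw [hadj, hgH, hg1 c h0, Fin.eq_one_of_ne_zero c h0]
        simp [FGraph, SimpleGraph.fromRel_adj, phiH, phiX, hHx', hHnS, hHnK, hxRD, Fin.ext_iff, -Fin.val_eq_zero_iff]
    · by_cases h0 : c = 0
      · rw [hadj, hgK, hg0 c h0, h0]
        simp [FGraph, SimpleGraph.fromRel_adj, phiK, phiV, hKv₁', hKnS, hKnRD, hv₁K, Fin.ext_iff, -Fin.val_eq_zero_iff]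
      · rw [hadj, hgK, hg1 c h0, Fin.eq_one_of_ne_zero c h0]
        simp [FGraph, SimpleGraph.fromRel_adj, phiK, phiX, fKmem, hKx']
    · by_cases h0 : c = 0
      · rw [hadj, hgB, hg0 c h0, h0]
        simp [FGraph, SimpleGraph.fromRel_adj, phiB, phiV, fBmem, hBv₁']
      · rw [hadj, hgB, hg1 c h0, Fin.eq_one_of_ne_zero c h0]
        simp [FGraph, SimpleGraph.fromRel_adj, phiB, phiX, fBmem, hBx']
    · by_cases h0 : c = 0 <;> by_cases h0' : c' = 0
      · rw [hadj, hg0 c h0, hg0 c' h0', h0, h0']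
        simp [FGraph, SimpleGraph.fromRel_adj, phiV, hv₁S, hv₁RD]
      · rw [hadj, hg0 c h0, hg1 c' h0', h0, Fin.eq_one_of_ne_zero c' h0']
        simp [FGraph, SimpleGraph.fromRel_adj, phiV, phiX, hv₁S, hv₁K, hxS, hxRD, hvx]
      · rw [hadj, hg1 c h0, hg0 c' h0', Fin.eq_one_of_ne_zero c h0, h0']
        simp [FGraph, SimpleGraph.fromRel_adj, phiV, phiX, hv₁S, hv₁K, hxS, hxRD, hxv]
      · rw [hadj, hg1 c h0, hg1 c' h0', Fin.eq_one_of_ne_zero c h0,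
          Fin.eq_one_of_ne_zero c' h0']
        simp [FGraph, SimpleGraph.fromRel_adj, phiX, hxS, hxK]
  refine ⟨m₁, t, m₂, ⟨hm₁or, ?_, hm₂2, ht1, ?_⟩, ⟨(SimpleGraph.Iso.symm
    ⟨Equiv.ofBijective g ⟨hginj, hgsurj⟩, fun {a b} => hrel a b⟩)⟩⟩
  · rw [hm₁card, hm₂card]; exact hord
  · intro h0
    have hRD0 : RD = ∅ := by
      have h := hm₁card
      rw [h0] at h
      exact (Set.ncard_eq_zero (Set.toFinite _)).mp h.symm
    obtain ⟨s₁, s₂, hs₁, hs₂, hss⟩ := hS2 hRD0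
    obtain ⟨k₁, hk₁⟩ := fBsurj s₁ hs₁
    obtain ⟨k₂, hk₂⟩ := fBsurj s₂ hs₂
    have hkk : k₁ ≠ k₂ := fun h => hss (by rw [← hk₁, ← hk₂, h])
    have h1 := k₁.isLt
    have h2 := k₂.isLt
    have : (k₁ : ℕ) ≠ (k₂ : ℕ) := fun h => hkk (Fin.ext h)
    omega

def Phi' {V : Type*} (v₁ x a₀ b₀ : V) (D S' K W : Set V) (u w : V) : Prop :=
  ((u = a₀ ∨ u = b₀) ∧ w ∈ D) ∨ (u = v₁ ∧ (w = a₀ ∨ w = b₀ ∨ w ∈ D ∨ w ∈ S')) ∨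
    (u ∈ W ∧ w ∈ K) ∨ (u = x ∧ (w = a₀ ∨ w = b₀ ∨ w ∈ S' ∨ w ∈ K))

set_option maxHeartbeats 2000000 in
lemma iso_F' {V : Type*} [Fintype V] (G : SimpleGraph V) (v₁ x a₀ b₀ : V)
    (D S' K W : Set V)
    (hvx : v₁ ≠ x) (hab : a₀ ≠ b₀)
    (hav : a₀ ≠ v₁) (hax : a₀ ≠ x) (hbv : b₀ ≠ v₁) (hbx : b₀ ≠ x)
    (haD : a₀ ∉ D) (haS' : a₀ ∉ S') (haK : a₀ ∉ K)
    (hbD : b₀ ∉ D) (hbS' : b₀ ∉ S') (hbK : b₀ ∉ K)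
    (hv₁D : v₁ ∉ D) (hv₁S' : v₁ ∉ S') (hv₁K : v₁ ∉ K)
    (hxD : x ∉ D) (hxS' : x ∉ S') (hxK : x ∉ K)
    (hDS' : Disjoint D S') (hDK : Disjoint D K) (hS'K : Disjoint S' K)
    (hWsub : W ⊆ K)
    (hcov : ∀ v, v = v₁ ∨ v = x ∨ v = a₀ ∨ v = b₀ ∨ v ∈ D ∨ v ∈ S' ∨ v ∈ K)
    (hadj : ∀ u w, G.Adj u w ↔ u ≠ w ∧
      (Phi' v₁ x a₀ b₀ D S' K W u w ∨ Phi' v₁ x a₀ b₀ D S' K W w u))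
    (hWcard : ∃ w₁ w₂ : V, w₁ ≠ w₂ ∧ W = {w₁, w₂})
    (hD2 : ∃ d₁ d₂, d₁ ∈ D ∧ d₂ ∈ D ∧ d₁ ≠ d₂) :
    ∃ s q m : ℕ, 2 ≤ s ∧ 2 ≤ q ∧ 2 ≤ m ∧ Nonempty (G ≃g F'Graph s q m) := by
  classical
  obtain ⟨m, fK, fKinj, fKmem, fKtop, fKsurj, hm2⟩ :
      ∃ (m : ℕ) (fK : Fin m → V), Function.Injective fK ∧ (∀ j, fK j ∈ K) ∧
        (∀ j : Fin m, fK j ∈ W ↔ (j : ℕ) < 2) ∧ (∀ v ∈ K, ∃ j, fK j = v) ∧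
        2 ≤ m := by
    obtain ⟨w₁, w₂, hw, hWeq⟩ := hWcard
    obtain ⟨n, f, h1, h2, h3, h4, _⟩ := enum_block K W hWsub hw hWeq
    exact ⟨2 + n, f, h1, h2, fun j => (h3 j).symm, h4, by omega⟩
  obtain ⟨s, fD, fDinj, fDmem, fDsurj⟩ :
      ∃ (s : ℕ) (fD : Fin s → V), Function.Injective fD ∧ (∀ i, fD i ∈ D) ∧
        (∀ v ∈ D, ∃ i, fD i = v) := by
    haveI : Fintype ↥D := (Set.toFinite D).fintype
    exact ⟨Fintype.card ↥D, fun k => (((Fintype.equivFin ↥D).symm k : ↥D) : V),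
      fun u w h => (Fintype.equivFin ↥D).symm.injective (Subtype.ext h),
      fun k => Subtype.mem _, fun v hv => ⟨Fintype.equivFin ↥D ⟨v, hv⟩,
        congrArg Subtype.val (Equiv.symm_apply_apply _ _)⟩⟩
  obtain ⟨q2, fB, fBinj, fBmem, fBsurj⟩ :
      ∃ (q2 : ℕ) (fB : Fin q2 → V), Function.Injective fB ∧ (∀ k, fB k ∈ S') ∧
        (∀ v ∈ S', ∃ k, fB k = v) := by
    haveI : Fintype ↥S' := (Set.toFinite S').fintype
    exact ⟨Fintype.card ↥S', fun k => (((Fintype.equivFin ↥S').symm k : ↥S') : V),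
      fun u w h => (Fintype.equivFin ↥S').symm.injective (Subtype.ext h),
      fun k => Subtype.mem _, fun v hv => ⟨Fintype.equivFin ↥S' ⟨v, hv⟩,
        congrArg Subtype.val (Equiv.symm_apply_apply _ _)⟩⟩
  have hs2 : 2 ≤ s := by
    obtain ⟨d₁, d₂, hd₁, hd₂, hdd⟩ := hD2
    obtain ⟨k₁, hk₁⟩ := fDsurj d₁ hd₁
    obtain ⟨k₂, hk₂⟩ := fDsurj d₂ hd₂
    have hkk : (k₁ : ℕ) ≠ (k₂ : ℕ) :=
      fun h => hdd (by rw [← hk₁, ← hk₂, Fin.ext h])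
    have h1 := k₁.isLt
    have h2 := k₂.isLt
    omega
  -- exclusion facts
  have hDa : ∀ i, ¬ fD i = a₀ := fun i h => haD (h ▸ fDmem i)
  have hDb : ∀ i, ¬ fD i = b₀ := fun i h => hbD (h ▸ fDmem i)
  have hDv : ∀ i, ¬ fD i = v₁ := fun i h => hv₁D (h ▸ fDmem i)
  have hDx : ∀ i, ¬ fD i = x := fun i h => hxD (h ▸ fDmem i)
  have hDnS' : ∀ i, fD i ∉ S' := fun i h => Set.disjoint_left.mp hDS' (fDmem i) h
  have hDnK : ∀ i, fD i ∉ K := fun i h => Set.disjoint_left.mp hDK (fDmem i) h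
  have hDnW : ∀ i, fD i ∉ W := fun i h => hDnK i (hWsub h)
  have hBa : ∀ k, ¬ fB k = a₀ := fun k h => haS' (h ▸ fBmem k)
  have hBb : ∀ k, ¬ fB k = b₀ := fun k h => hbS' (h ▸ fBmem k)
  have hBv : ∀ k, ¬ fB k = v₁ := fun k h => hv₁S' (h ▸ fBmem k)
  have hBx : ∀ k, ¬ fB k = x := fun k h => hxS' (h ▸ fBmem k)
  have hBnD : ∀ k, fB k ∉ D := fun k h => Set.disjoint_left.mp hDS' h (fBmem k)
  have hBnK : ∀ k, fB k ∉ K := fun k h => Set.disjoint_left.mp hS'K (fBmem k) h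
  have hBnW : ∀ k, fB k ∉ W := fun k h => hBnK k (hWsub h)
  have hKa : ∀ j, ¬ fK j = a₀ := fun j h => haK (h ▸ fKmem j)
  have hKb : ∀ j, ¬ fK j = b₀ := fun j h => hbK (h ▸ fKmem j)
  have hKv : ∀ j, ¬ fK j = v₁ := fun j h => hv₁K (h ▸ fKmem j)
  have hKx : ∀ j, ¬ fK j = x := fun j h => hxK (h ▸ fKmem j)
  have hKnD : ∀ j, fK j ∉ D := fun j h => Set.disjoint_left.mp hDK h (fKmem j)
  have hKnS' : ∀ j, fK j ∉ S' := fun j h => Set.disjoint_left.mp hS'K h (fKmem j)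
  have haW : a₀ ∉ W := fun h => haK (hWsub h)
  have hbW : b₀ ∉ W := fun h => hbK (hWsub h)
  have hv₁W : v₁ ∉ W := fun h => hv₁K (hWsub h)
  have hxW : x ∉ W := fun h => hxK (hWsub h)
  have hva : ¬ v₁ = a₀ := fun h => hav h.symm
  have hvb : ¬ v₁ = b₀ := fun h => hbv h.symm
  have hxa : ¬ x = a₀ := fun h => hax h.symm
  have hxb : ¬ x = b₀ := fun h => hbx h.symm
  have hxv : ¬ x = v₁ := fun h => hvx h.symm
  have hba : ¬ b₀ = a₀ := fun h => hab h.symm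
  have hDa' : ∀ i, ¬ a₀ = fD i := fun i h => hDa i h.symm
  have hDb' : ∀ i, ¬ b₀ = fD i := fun i h => hDb i h.symm
  have hDv' : ∀ i, ¬ v₁ = fD i := fun i h => hDv i h.symm
  have hDx' : ∀ i, ¬ x = fD i := fun i h => hDx i h.symm
  have hBa' : ∀ k, ¬ a₀ = fB k := fun k h => hBa k h.symm
  have hBb' : ∀ k, ¬ b₀ = fB k := fun k h => hBb k h.symm
  have hBv' : ∀ k, ¬ v₁ = fB k := fun k h => hBv k h.symm
  have hBx' : ∀ k, ¬ x = fB k := fun k h => hBx k h.symm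
  have hKa' : ∀ j, ¬ a₀ = fK j := fun j h => hKa j h.symm
  have hKb' : ∀ j, ¬ b₀ = fK j := fun j h => hKb j h.symm
  have hKv' : ∀ j, ¬ v₁ = fK j := fun j h => hKv j h.symm
  have hKx' : ∀ j, ¬ x = fK j := fun j h => hKx j h.symm
  -- the bijection, packaged opaquely
  obtain ⟨g, hgA0, hgA1, hgD, hgB, hgV, hgK, hgX, hginj, hgsurj⟩ :
      ∃ g : F'Vert s (q2 + 2) m → V,
        (∀ c : Fin 2, c = 0 → g (Sum.inl (Sum.inl c)) = a₀) ∧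
        (∀ c : Fin 2, c ≠ 0 → g (Sum.inl (Sum.inl c)) = b₀) ∧
        (∀ i, g (Sum.inl (Sum.inr (Sum.inl i))) = fD i) ∧
        (∀ k : Fin (q2 + 2 - 2), g (Sum.inl (Sum.inr (Sum.inr k))) = fB k) ∧
        (∀ u : Unit, g (Sum.inr (Sum.inl u)) = v₁) ∧
        (∀ j, g (Sum.inr (Sum.inr (Sum.inl j))) = fK j) ∧
        (∀ u : Unit, g (Sum.inr (Sum.inr (Sum.inr u))) = x) ∧
        Function.Injective g ∧ Function.Surjective g := by
    refine ⟨Sum.elim (Sum.elim (fun c => if c = 0 then a₀ else b₀) (Sum.elim fD fB))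
      (Sum.elim (fun _ => v₁) (Sum.elim fK (fun _ => x))),
      fun c hc => by simp [hc], fun c hc => by simp [hc],
      fun i => rfl, fun k => rfl, fun u => rfl, fun j => rfl, fun u => rfl, ?_, ?_⟩
    · intro u w h
      rcases u with (c | (i | k)) | (⟨⟩ | (j | ⟨⟩)) <;>
        rcases w with (c' | (i' | k')) | (⟨⟩ | (j' | ⟨⟩)) <;>
        simp only [Sum.elim_inl, Sum.elim_inr] at h
      · by_cases h0 : c = 0 <;> by_cases h0' : c' = 0
        · rw [h0, h0']
        · rw [if_pos h0, if_neg h0'] at h; exact absurd h hab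
        · rw [if_neg h0, if_pos h0'] at h; exact absurd h hba
        · rw [Fin.eq_one_of_ne_zero c h0, Fin.eq_one_of_ne_zero c' h0']
      · by_cases h0 : c = 0
        · rw [if_pos h0] at h; exact absurd h.symm (hDa i')
        · rw [if_neg h0] at h; exact absurd h.symm (hDb i')
      · by_cases h0 : c = 0
        · rw [if_pos h0] at h; exact absurd h.symm (hBa k')
        · rw [if_neg h0] at h; exact absurd h.symm (hBb k')
      · by_cases h0 : c = 0
        · rw [if_pos h0] at h; exact absurd h.symm hva
        · rw [if_neg h0] at h; exact absurd h.symm hvb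
      · by_cases h0 : c = 0
        · rw [if_pos h0] at h; exact absurd h.symm (hKa j')
        · rw [if_neg h0] at h; exact absurd h.symm (hKb j')
      · by_cases h0 : c = 0
        · rw [if_pos h0] at h; exact absurd h.symm hxa
        · rw [if_neg h0] at h; exact absurd h.symm hxb
      · by_cases h0 : c' = 0
        · rw [if_pos h0] at h; exact absurd h (hDa i)
        · rw [if_neg h0] at h; exact absurd h (hDb i)
      · rw [fDinj h]
      · exact absurd (h ▸ fDmem i) (hBnD k')
      · exact absurd h (hDv i)
      · exact absurd (h ▸ fDmem i) (hKnD j')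
      · exact absurd h (hDx i)
      · by_cases h0 : c' = 0
        · rw [if_pos h0] at h; exact absurd h (hBa k)
        · rw [if_neg h0] at h; exact absurd h (hBb k)
      · exact absurd (h.symm ▸ fDmem i') (hBnD k)
      · rw [fBinj h]
      · exact absurd h (hBv k)
      · exact absurd (h.symm ▸ fKmem j') (hBnK k)
      · exact absurd h (hBx k)
      · by_cases h0 : c' = 0
        · rw [if_pos h0] at h; exact absurd h.symm hav
        · rw [if_neg h0] at h; exact absurd h.symm hbv
      · exact absurd h.symm (hDv i')
      · exact absurd h.symm (hBv k')
      · rfl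
      · exact absurd h.symm (hKv j')
      · exact absurd h hvx
      · by_cases h0 : c' = 0
        · rw [if_pos h0] at h; exact absurd h (hKa j)
        · rw [if_neg h0] at h; exact absurd h (hKb j)
      · exact absurd (h.symm ▸ fDmem i') (hKnD j)
      · exact absurd (h.symm ▸ fBmem k') (hKnS' j)
      · exact absurd h (hKv j)
      · rw [fKinj h]
      · exact absurd h (hKx j)
      · by_cases h0 : c' = 0
        · rw [if_pos h0] at h; exact absurd h.symm hax
        · rw [if_neg h0] at h; exact absurd h.symm hbx
      · exact absurd h.symm (hDx i')
      · exact absurd h.symm (hBx k')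
      · exact absurd h hxv
      · exact absurd h.symm (hKx j')
      · rfl
    · intro v
      rcases hcov v with rfl | rfl | rfl | rfl | hv | hv | hv
      · exact ⟨Sum.inr (Sum.inl ()), rfl⟩
      · exact ⟨Sum.inr (Sum.inr (Sum.inr ())), rfl⟩
      · exact ⟨Sum.inl (Sum.inl 0), by simp⟩
      · exact ⟨Sum.inl (Sum.inl 1), by norm_num⟩
      · obtain ⟨i, hi⟩ := fDsurj v hv; exact ⟨Sum.inl (Sum.inr (Sum.inl i)), hi⟩
      · obtain ⟨k, hk⟩ := fBsurj v hv; exact ⟨Sum.inl (Sum.inr (Sum.inr k)), hk⟩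
      · obtain ⟨j, hj⟩ := fKsurj v hv; exact ⟨Sum.inr (Sum.inr (Sum.inl j)), hj⟩
  -- Phi' evaluation lemmas
  have phiA : ∀ b : V, Phi' v₁ x a₀ b₀ D S' K W a₀ b ↔ b ∈ D := by
    intro b
    simp only [Phi', hav, hax, haW, eq_self_iff_true, true_or, true_and, false_and,
      and_false, or_false, false_or]
    try tauto
  have phiAb : ∀ b : V, Phi' v₁ x a₀ b₀ D S' K W b₀ b ↔ b ∈ D := by
    intro b
    simp only [Phi', hbv, hbx, hbW, hba, eq_self_iff_true, or_true, true_and,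
      false_and, and_false, or_false, false_or]
    try tauto
  have phiD : ∀ i (b : V), Phi' v₁ x a₀ b₀ D S' K W (fD i) b ↔ False := by
    intro i b
    simp only [Phi', hDa i, hDb i, hDv i, hDx i, hDnW i, false_or, false_and,
      and_false, or_false, iff_false]
    try tauto
  have phiS : ∀ k (b : V), Phi' v₁ x a₀ b₀ D S' K W (fB k) b ↔ False := by
    intro k b
    simp only [Phi', hBa k, hBb k, hBv k, hBx k, hBnW k, false_or, false_and,
      and_false, or_false, iff_false]
    try tauto
  have phiV : ∀ b : V, Phi' v₁ x a₀ b₀ D S' K W v₁ b ↔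
      (b = a₀ ∨ b = b₀ ∨ b ∈ D ∨ b ∈ S') := by
    intro b
    simp only [Phi', hva, hvb, hvx, hv₁W, eq_self_iff_true, true_and, false_and,
      and_false, or_false, false_or]
    try tauto
  have phiK : ∀ j (b : V), Phi' v₁ x a₀ b₀ D S' K W (fK j) b ↔
      ((j : ℕ) < 2 ∧ b ∈ K) := by
    intro j b
    simp only [Phi', hKa j, hKb j, hKv j, hKx j, fKtop j, false_or, false_and,
      and_false, or_false]
    try tauto
  have phiX : ∀ b : V, Phi' v₁ x a₀ b₀ D S' K W x b ↔
      (b = a₀ ∨ b = b₀ ∨ b ∈ S' ∨ b ∈ K) := by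
    intro b
    simp only [Phi', hxa, hxb, hxv, hxW, eq_self_iff_true, true_and, false_and,
      and_false, or_false, false_or]
    try tauto
  have hrel : ∀ u w : F'Vert s (q2 + 2) m,
      G.Adj (g u) (g w) ↔ (F'Graph s (q2 + 2) m).Adj u w := by
    intro u w
    have hA : ∀ c : Fin 2, g (Sum.inl (Sum.inl c)) = a₀ ∨
        (g (Sum.inl (Sum.inl c)) = b₀ ∧ c ≠ 0) := by
      intro c
      by_cases h0 : c = 0
      · exact Or.inl (hgA0 c h0)
      · exact Or.inr ⟨hgA1 c h0, h0⟩
    rcases u with (c | (i | k)) | (⟨⟩ | (j | ⟨⟩)) <;>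
      rcases w with (c' | (i' | k')) | (⟨⟩ | (j' | ⟨⟩))
    · rcases hA c with hc | ⟨hc, hc0⟩ <;> rcases hA c' with hc' | ⟨hc', hc0'⟩ <;>
        rw [hadj, hc, hc'] <;>
        [skip; rw [Fin.eq_one_of_ne_zero c' hc0']; rw [Fin.eq_one_of_ne_zero c hc0];
         rw [Fin.eq_one_of_ne_zero c hc0, Fin.eq_one_of_ne_zero c' hc0']] <;>
        simp [F'Graph, SimpleGraph.fromRel_adj, phiA, phiAb, haD, hbD, hab, hba,
          Fin.ext_iff]
    · rcases hA c with hc | ⟨hc, hc0⟩ <;> rw [hadj, hc, hgD] <;>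
        simp [F'Graph, SimpleGraph.fromRel_adj, phiA, phiAb, phiD, fDmem, hDa, hDb, hDa', hDb']
    · rcases hA c with hc | ⟨hc, hc0⟩ <;> rw [hadj, hc, hgB] <;>
        simp [F'Graph, SimpleGraph.fromRel_adj, phiA, phiAb, phiS, hBnD]
    · rcases hA c with hc | ⟨hc, hc0⟩ <;> rw [hadj, hc, hgV ()] <;>
        simp [F'Graph, SimpleGraph.fromRel_adj, phiA, phiAb, phiV, hv₁D, hav, hbv,
          hva, hvb]
    · rcases hA c with hc | ⟨hc, hc0⟩ <;> rw [hadj, hc, hgK] <;>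
        simp [F'Graph, SimpleGraph.fromRel_adj, phiA, phiAb, phiK, hKnD, haK, hbK]
    · rcases hA c with hc | ⟨hc, hc0⟩ <;> rw [hadj, hc, hgX ()] <;>
        simp [F'Graph, SimpleGraph.fromRel_adj, phiA, phiAb, phiX, hxD, hax, hbx,
          hxa, hxb]
    · rcases hA c' with hc' | ⟨hc', hc0'⟩ <;> rw [hadj, hgD, hc'] <;>
        simp [F'Graph, SimpleGraph.fromRel_adj, phiA, phiAb, phiD, fDmem, hDa, hDb, hDa', hDb']
    · rw [hadj, hgD, hgD]
      simp [F'Graph, SimpleGraph.fromRel_adj, phiD, fDinj.ne_iff]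
    · rw [hadj, hgD, hgB]
      simp [F'Graph, SimpleGraph.fromRel_adj, phiD, phiS]
    · rw [hadj, hgD, hgV ()]
      simp [F'Graph, SimpleGraph.fromRel_adj, phiD, phiV, fDmem, hDv, hDv']
    · rw [hadj, hgD, hgK]
      simp [F'Graph, SimpleGraph.fromRel_adj, phiD, phiK, hKnD, hDnK]
    · rw [hadj, hgD, hgX ()]
      simp [F'Graph, SimpleGraph.fromRel_adj, phiD, phiX, hDa, hDb, hDa', hDb', hDnS', hDnK, hDx, hDx']
    · rcases hA c' with hc' | ⟨hc', hc0'⟩ <;> rw [hadj, hgB, hc'] <;>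
        simp [F'Graph, SimpleGraph.fromRel_adj, phiA, phiAb, phiS, hBnD]
    · rw [hadj, hgB, hgD]
      simp [F'Graph, SimpleGraph.fromRel_adj, phiD, phiS]
    · rw [hadj, hgB, hgB]
      simp [F'Graph, SimpleGraph.fromRel_adj, phiS]
    · rw [hadj, hgB, hgV ()]
      simp [F'Graph, SimpleGraph.fromRel_adj, phiS, phiV, fBmem, hBv, hBv']
    · rw [hadj, hgB, hgK]
      simp [F'Graph, SimpleGraph.fromRel_adj, phiS, phiK, hBnK]
    · rw [hadj, hgB, hgX ()]
      simp [F'Graph, SimpleGraph.fromRel_adj, phiS, phiX, fBmem, hBx, hBx']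
    · rcases hA c' with hc' | ⟨hc', hc0'⟩ <;> rw [hadj, hgV (), hc'] <;>
        simp [F'Graph, SimpleGraph.fromRel_adj, phiA, phiAb, phiV, hv₁D, hav, hbv,
          hva, hvb]
    · rw [hadj, hgV (), hgD]
      simp [F'Graph, SimpleGraph.fromRel_adj, phiD, phiV, fDmem, hDv, hDv']
    · rw [hadj, hgV (), hgB]
      simp [F'Graph, SimpleGraph.fromRel_adj, phiS, phiV, fBmem, hBv, hBv']
    · rw [hadj, hgV ()]
      simp [F'Graph, SimpleGraph.fromRel_adj]
    · rw [hadj, hgV (), hgK]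
      simp [F'Graph, SimpleGraph.fromRel_adj, phiK, phiV, hKa, hKb, hKa', hKb', hKnD, hKnS',
        hKv, hKv', hv₁K]
    · rw [hadj, hgV (), hgX ()]
      simp [F'Graph, SimpleGraph.fromRel_adj, phiV, phiX, hva, hvb, hv₁S', hv₁K,
        hxa, hxb, hxD, hxS', hvx, hxv]
    · rcases hA c' with hc' | ⟨hc', hc0'⟩ <;> rw [hadj, hgK, hc'] <;>
        simp [F'Graph, SimpleGraph.fromRel_adj, phiA, phiAb, phiK, hKnD, haK, hbK]
    · rw [hadj, hgK, hgD]
      simp [F'Graph, SimpleGraph.fromRel_adj, phiD, phiK, hKnD, hDnK]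
    · rw [hadj, hgK, hgB]
      simp [F'Graph, SimpleGraph.fromRel_adj, phiS, phiK, hBnK]
    · rw [hadj, hgK, hgV ()]
      simp [F'Graph, SimpleGraph.fromRel_adj, phiK, phiV, hKa, hKb, hKa', hKb', hKnD, hKnS',
        hKv, hKv', hv₁K]
    · rw [hadj, hgK, hgK]
      simp [F'Graph, SimpleGraph.fromRel_adj, phiK, fKmem, fKinj.ne_iff]
    · rw [hadj, hgK, hgX ()]
      simp [F'Graph, SimpleGraph.fromRel_adj, phiK, phiX, fKmem, hKa, hKb, hKa', hKb', hKnS', hKx, hKx']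
    · rcases hA c' with hc' | ⟨hc', hc0'⟩ <;> rw [hadj, hgX (), hc'] <;>
        simp [F'Graph, SimpleGraph.fromRel_adj, phiA, phiAb, phiX, hxD, hax, hbx,
          hxa, hxb]
    · rw [hadj, hgX (), hgD]
      simp [F'Graph, SimpleGraph.fromRel_adj, phiD, phiX, hDa, hDb, hDa', hDb', hDnS', hDnK, hDx, hDx']
    · rw [hadj, hgX (), hgB]
      simp [F'Graph, SimpleGraph.fromRel_adj, phiS, phiX, fBmem, hBx, hBx']
    · rw [hadj, hgX (), hgV ()]
      simp [F'Graph, SimpleGraph.fromRel_adj, phiV, phiX, hva, hvb, hv₁S', hv₁K,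
        hxa, hxb, hxD, hxS', hvx, hxv]
    · rw [hadj, hgX (), hgK]
      simp [F'Graph, SimpleGraph.fromRel_adj, phiK, phiX, fKmem, hKa, hKb, hKa', hKb', hKnS', hKx, hKx']
    · rw [hadj, hgX ()]
      simp [F'Graph, SimpleGraph.fromRel_adj]
  exact ⟨s, q2 + 2, m, hs2, by omega, hm2, ⟨(SimpleGraph.Iso.symm
    ⟨Equiv.ofBijective g ⟨hginj, hgsurj⟩, fun {u w} => hrel u w⟩)⟩⟩

set_option maxHeartbeats 4000000 in
theorem stmt12 {V : Type*} [Fintype V] (G : SimpleGraph V) (hconn : G.Connected)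
    (hcrit : Critical2 G) (x : V) (C₁ C₂ : Set V)
    (hcomp : IsTwoComponents G x C₁ C₂)
    (v₂ v₃ : V) (hne : v₂ ≠ v₃)
    (hv₂ : UnivIn G C₂ v₂) (hv₃ : UnivIn G C₂ v₃)
    (hadj₂ : G.Adj v₂ x) (hadj₃ : G.Adj v₃ x)
    (hC₁ : ∀ v, UnivIn G C₁ v → ¬ G.Adj v x) :
    InFamilyFF' G := by
  classical
  obtain ⟨hne1, hne2', hdisj, hcup, hconn1, hconn2, hcross⟩ := hcomp
  obtain ⟨⟨hwin2, hnw1⟩, hcritE⟩ := hcrit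
  have hx1 : x ∉ C₁ := by
    intro h
    have : x ∈ ({x}ᶜ : Set V) := hcup ▸ Set.mem_union_left _ h
    exact this rfl
  have hx2 : x ∉ C₂ := by
    intro h
    have : x ∈ ({x}ᶜ : Set V) := hcup ▸ Set.mem_union_right _ h
    exact this rfl
  have htri : ∀ v : V, v = x ∨ v ∈ C₁ ∨ v ∈ C₂ := by
    intro v
    by_cases h : v = x
    · exact Or.inl h
    · have : v ∈ C₁ ∪ C₂ := hcup ▸ (h : v ∈ ({x}ᶜ : Set V))
      exact Or.inr this
  have hd12 : ∀ v ∈ C₁, v ∉ C₂ := fun v hv => Set.disjoint_left.mp hdisj hv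
  have hv₂C : v₂ ∈ C₂ := hv₂.1
  have hv₃C : v₃ ∈ C₂ := hv₃.1
  have hv₂x : v₂ ≠ x := fun h => hx2 (h ▸ hv₂C)
  have hv₃x : v₃ ≠ x := fun h => hx2 (h ▸ hv₃C)
  have hxv₂ : G.Adj x v₂ := hadj₂.symm
  have hxv₃ : G.Adj x v₃ := hadj₃.symm
  -- characterization of dominating pairs avoiding x
  have pairchar : ∀ a b : V, a ≠ x → b ≠ x → Dominating G {a, b} →
      (UnivIn G C₁ a ∧ UnivIn G C₂ b) ∨ (UnivIn G C₁ b ∧ UnivIn G C₂ a) := by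
    have key : ∀ a b : V, a ∈ C₁ → b ≠ x → Dominating G {a, b} →
        UnivIn G C₁ a ∧ UnivIn G C₂ b := by
      intro a b ha hbx hdom
      have hb : b ∈ C₂ := by
        rcases htri b with rfl | hb | hb
        · exact absurd rfl hbx
        · exfalso
          obtain ⟨c₂, hc₂⟩ := hne2'
          have h1 : c₂ ≠ a := fun h => hd12 a ha (h ▸ hc₂)
          have h2 : c₂ ≠ b := fun h => hd12 b hb (h ▸ hc₂)
          rcases dom_pair_elim hdom h1 h2 with h | h
          · exact hcross a ha c₂ hc₂ h
          · exact hcross b hb c₂ hc₂ h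
        · exact hb
      refine ⟨⟨ha, ?_⟩, ⟨hb, ?_⟩⟩
      · intro u hu hua
        have hub : u ≠ b := fun h => hd12 u hu (h ▸ hb)
        rcases dom_pair_elim hdom hua hub with h | h
        · exact h
        · exact absurd h.symm (hcross u hu b hb)
      · intro u hu hub
        have hua : u ≠ a := fun h => hd12 a ha (h ▸ hu)
        rcases dom_pair_elim hdom hua hub with h | h
        · exact absurd h (hcross a ha u hu)
        · exact h
    intro a b hax hbx hdom
    rcases htri a with rfl | ha | ha
    · exact absurd rfl hax
    · exact Or.inl (key a b ha hbx hdom)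
    · rcases htri b with rfl | hb | hb
      · exact absurd rfl hbx
      · exact Or.inr (key b a hb hax (dom_pair_comm hdom))
      · exfalso
        obtain ⟨c₁, hc₁⟩ := hne1
        have h1 : c₁ ≠ a := fun h => hd12 c₁ hc₁ (h ▸ ha)
        have h2 : c₁ ≠ b := fun h => hd12 c₁ hc₁ (h ▸ hb)
        rcases dom_pair_elim hdom h1 h2 with h | h
        · exact hcross c₁ hc₁ a ha h.symm
        · exact hcross c₁ hc₁ b hb h.symm
  have nouniv : ∀ d : V, d ≠ x → ¬ Dominating G {d} := by
    intro d hdx hdom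
    rcases htri d with rfl | hd | hd
    · exact hdx rfl
    · have hv : v₂ ∉ ({d} : Set V) := by
        simp only [Set.mem_singleton_iff]
        exact fun h => hd12 d hd (h ▸ hv₂C)
      obtain ⟨e, he, hadj'⟩ := hdom v₂ hv
      rw [Set.mem_singleton_iff] at he
      subst he
      exact hcross e hd v₂ hv₂C hadj'
    · obtain ⟨c₁, hc₁⟩ := hne1
      have hv : c₁ ∉ ({d} : Set V) := by
        simp only [Set.mem_singleton_iff]
        exact fun h => hd12 c₁ hc₁ (h ▸ hd)
      obtain ⟨e, he, hadj'⟩ := hdom c₁ hv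
      rw [Set.mem_singleton_iff] at he
      subst he
      exact hcross c₁ hc₁ e hd hadj'.symm
  -- Step A : C₁ has a universal vertex v₁
  obtain ⟨v₁, hv₁⟩ : ∃ p, UnivIn G C₁ p := by
    obtain ⟨d₁, hd₁x, hcase⟩ := hwin2 x
    rcases hcase with hdom | hforall
    · exact absurd hdom (nouniv d₁ hd₁x)
    · obtain ⟨s₂, hs₂mem, hs₂d⟩ := pick2 (s := d₁) hne
      have hs₂x : s₂ ≠ x := by rcases hs₂mem with rfl | rfl <;> [exact hv₂x; exact hv₃x]
      obtain ⟨d₂, hd₂mem, hd₂dom⟩ := hforall s₂ (notmem_pair hs₂x hs₂d)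
      simp only [Set.mem_insert_iff, Set.mem_singleton_iff, not_or] at hd₂mem
      rcases pairchar d₁ d₂ hd₁x hd₂mem.1 hd₂dom with ⟨h, _⟩ | ⟨h, _⟩
      · exact ⟨d₁, h⟩
      · exact ⟨d₂, h⟩
  have hv₁C : v₁ ∈ C₁ := hv₁.1
  have hv₁adj : ∀ u ∈ C₁, u ≠ v₁ → G.Adj v₁ u := hv₁.2
  have hv₁x : ¬ G.Adj v₁ x := hC₁ v₁ hv₁
  have hv₁nx : v₁ ≠ x := fun h => hx1 (h ▸ hv₁C)
  have hv₁n2 : v₁ ≠ v₂ := fun h => hd12 v₁ hv₁C (h ▸ hv₂C)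
  have hv₁n3 : v₁ ≠ v₃ := fun h => hd12 v₁ hv₁C (h ▸ hv₃C)
  have nouniv2 : ∀ d : V, ¬ Dominating G {d} := by
    intro d hdom
    rcases eq_or_ne d x with rfl | hdx
    · obtain ⟨e, he, hadj'⟩ := hdom v₁ (by simp [hv₁nx])
      rw [Set.mem_singleton_iff] at he
      subst he
      exact hv₁x hadj'.symm
    · exact nouniv d hdx hdom
  -- S := the C₁-neighbours of x : nonempty by connectivity
  obtain ⟨c₀, hc₀C, hc₀adj⟩ : ∃ c, c ∈ C₁ ∧ G.Adj x c := by
    by_contra hno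
    push_neg at hno
    have hclosed : ∀ a ∈ C₁, ∀ b, G.Adj a b → b ∈ C₁ := by
      intro a ha b hab
      rcases htri b with rfl | hb | hb
      · exact absurd hab.symm (hno a ha)
      · exact hb
      · exact absurd hab (hcross a ha b hb)
    obtain ⟨w⟩ := hconn.preconnected v₁ v₂
    exact hd12 v₂ (closed_of_walk hclosed w hv₁C) hv₂C
  -- Step B : v₁ is the unique universal vertex of C₁
  have hPuniq : ∀ p, UnivIn G C₁ p → p = v₁ := by
    intro p hp
    by_contra hpv
    have hpC : p ∈ C₁ := hp.1
    have hpx : ¬ G.Adj p x := hC₁ p hp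
    have hpnx : p ≠ x := fun h => hx1 (h ▸ hpC)
    have hpc₀ : p ≠ c₀ := fun h => hpx (h ▸ hc₀adj.symm)
    have hv₁c₀ : v₁ ≠ c₀ := fun h => hv₁x (h ▸ hc₀adj.symm)
    have hv₂c₀ : v₂ ≠ c₀ := fun h => hd12 c₀ hc₀C (h ▸ hv₂C)
    have hv₃c₀ : v₃ ≠ c₀ := fun h => hd12 c₀ hc₀C (h ▸ hv₃C)
    refine hcritE x c₀ hc₀adj ?_
    exact wins2_of' _ v₁ p v₂ v₃ (fun h => hpv h.symm) hne hv₁n2 hv₁n3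
      (fun h => hd12 p hpC (h ▸ hv₂C)) (fun h => hd12 p hpC (h ▸ hv₃C))
      (surv_pw htri hv₁ hv₂ hadj₂ hv₁nx hv₁c₀ hv₂x hv₂c₀)
      (surv_pw htri hv₁ hv₃ hadj₃ hv₁nx hv₁c₀ hv₃x hv₃c₀)
      (surv_pw htri hp hv₂ hadj₂ hpnx hpc₀ hv₂x hv₂c₀)
      (surv_pw htri hp hv₃ hadj₃ hpnx hpc₀ hv₃x hv₃c₀)
  -- Step C : x is adjacent to every vertex of C₂
  have hC₂N : ∀ z ∈ C₂, G.Adj x z := by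
    by_contra hno
    push_neg at hno
    obtain ⟨z, hzC, hzN⟩ := hno
    have hzx : z ≠ x := fun h => hx2 (h ▸ hzC)
    obtain ⟨d₁, hd₁v, hcase⟩ := hwin2 v₁
    rcases hcase with hdom | hforall
    · exact nouniv2 d₁ hdom
    · obtain ⟨s₂, hs₂mem, hs₂d, hs₂v⟩ := pick3 (s := d₁) (t := v₁) hne hv₂x hv₃x
      obtain ⟨d₂, hd₂mem, hdom2⟩ := hforall s₂ (notmem_pair hs₂v hs₂d)
      simp only [Set.mem_insert_iff, Set.mem_singleton_iff, not_or] at hd₂mem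
      obtain ⟨hd₂v, hd₂d, hd₂s⟩ := hd₂mem
      have xpair : ∀ c : V, c ≠ x → Dominating G {x, c} → False := by
        intro c hcx hdomc
        rcases htri c with rfl | hc | hc
        · exact hcx rfl
        · have h1 : z ≠ x := hzx
          have h2 : z ≠ c := fun h => hd12 c hc (h ▸ hzC)
          rcases dom_pair_elim hdomc h1 h2 with h | h
          · exact hzN h
          · exact hcross c hc z hzC h
        · have h1 : v₁ ≠ x := hv₁nx
          have h2 : v₁ ≠ c := fun h => hd12 v₁ hv₁C (h ▸ hc)
          rcases dom_pair_elim hdomc h1 h2 with h | h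
          · exact hv₁x h.symm
          · exact hcross v₁ hv₁C c hc h.symm
      by_cases hd₁x : d₁ = x
      · subst hd₁x
        exact xpair d₂ hd₂d hdom2
      · by_cases hd₂x : d₂ = x
        · subst hd₂x
          exact xpair d₁ hd₁x (dom_pair_comm hdom2)
        · rcases pairchar d₁ d₂ hd₁x hd₂x hdom2 with ⟨h, _⟩ | ⟨h, _⟩
          · exact hd₁v (hPuniq d₁ h)
          · exact hd₂v (hPuniq d₂ h)
  -- the key sets S and R
  set S : Set V := {c | c ∈ C₁ ∧ G.Adj x c} with hSdef
  set R : Set V := {c | c ∈ C₁ ∧ c ≠ v₁ ∧ Dominating G {x, c}} with hRdef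
  have hc₀S : c₀ ∈ S := ⟨hc₀C, hc₀adj⟩
  have hv₁nS : v₁ ∉ S := fun h => hv₁x h.2.symm
  have hv₁Q : Dominating G {x, v₁} := by
    apply dom_pair_of
    intro v hvx hvv
    rcases htri v with rfl | hv | hv
    · exact absurd rfl hvx
    · exact Or.inr (hv₁adj v hv hvv)
    · exact Or.inl (hC₂N v hv)
  -- classification of dominating pairs avoiding v₁
  have pairR : ∀ d₁ d₂ : V, d₁ ≠ v₁ → d₂ ≠ v₁ → d₁ ≠ d₂ → Dominating G {d₁, d₂} →
      (d₁ = x ∧ d₂ ∈ R) ∨ (d₂ = x ∧ d₁ ∈ R) := by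
    have key : ∀ c : V, c ≠ v₁ → c ≠ x → Dominating G {x, c} → c ∈ R := by
      intro c hcv hcx hdomc
      rcases htri c with rfl | hc | hc
      · exact absurd rfl hcx
      · exact ⟨hc, hcv, hdomc⟩
      · exfalso
        have h2 : v₁ ≠ c := fun h => hd12 v₁ hv₁C (h ▸ hc)
        rcases dom_pair_elim hdomc hv₁nx h2 with h | h
        · exact hv₁x h.symm
        · exact hcross v₁ hv₁C c hc h.symm
    intro d₁ d₂ h1 h2 h12 hdom
    by_cases hd₁x : d₁ = x
    · subst hd₁x
      exact Or.inl ⟨rfl, key d₂ h2 (fun h => h12 h.symm) hdom⟩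
    · by_cases hd₂x : d₂ = x
      · subst hd₂x
        exact Or.inr ⟨rfl, key d₁ h1 hd₁x (dom_pair_comm hdom)⟩
      · rcases pairchar d₁ d₂ hd₁x hd₂x hdom with ⟨h, _⟩ | ⟨h, _⟩
        · exact absurd (hPuniq d₁ h) h1
        · exact absurd (hPuniq d₂ h) h2
  -- Step E : R has two distinct elements
  obtain ⟨r₁, r₂, hr₁R, hr₂R, hr12⟩ : ∃ r₁ r₂, r₁ ∈ R ∧ r₂ ∈ R ∧ r₁ ≠ r₂ := by
    obtain ⟨d₁, hd₁v, hcase⟩ := hwin2 v₁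
    rcases hcase with hdom | hforall
    · exact absurd hdom (nouniv2 d₁)
    · by_contra hno
      push_neg at hno
      by_cases hd₁x : d₁ = x
      · by_cases hRne : ∃ r, r ∈ R
        · obtain ⟨r, hr⟩ := hRne
          have hrv : r ≠ v₁ := hr.2.1
          have hrx : r ≠ x := fun h => hx1 (h ▸ hr.1)
          have hrd : r ≠ d₁ := fun h => hrx (h.trans hd₁x)
          obtain ⟨d₂, hd₂mem, hdom2⟩ := hforall r (notmem_pair hrv hrd)
          simp only [Set.mem_insert_iff, Set.mem_singleton_iff, not_or] at hd₂mem
          obtain ⟨hd₂v, hd₂d, hd₂r⟩ := hd₂mem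
          have hd₂x : d₂ ≠ x := fun h => hd₂d (h.trans hd₁x.symm)
          rcases pairR d₁ d₂ hd₁v hd₂v (fun h => hd₂d h.symm) hdom2 with
            ⟨-, hR'⟩ | ⟨hxx, -⟩
          · exact hd₂r (hno d₂ r hR' hr)
          · exact hd₂x hxx
        · have hv₂d : v₂ ≠ d₁ := fun h => hv₂x (h.trans hd₁x)
          obtain ⟨d₂, hd₂mem, hdom2⟩ := hforall v₂ (notmem_pair hv₁n2.symm hv₂d)
          simp only [Set.mem_insert_iff, Set.mem_singleton_iff, not_or] at hd₂mem
          obtain ⟨hd₂v, hd₂d, hd₂2⟩ := hd₂mem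
          have hd₂x : d₂ ≠ x := fun h => hd₂d (h.trans hd₁x.symm)
          rcases pairR d₁ d₂ hd₁v hd₂v (fun h => hd₂d h.symm) hdom2 with
            ⟨-, hR'⟩ | ⟨hxx, -⟩
          · exact hRne ⟨d₂, hR'⟩
          · exact hd₂x hxx
      · have hxd : x ∉ ({v₁, d₁} : Set V) :=
          notmem_pair hv₁nx.symm (fun h => hd₁x h.symm)
        obtain ⟨d₂, hd₂mem, hdom2⟩ := hforall x hxd
        simp only [Set.mem_insert_iff, Set.mem_singleton_iff, not_or] at hd₂mem
        obtain ⟨hd₂v, hd₂d, hd₂x⟩ := hd₂mem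
        rcases pairR d₁ d₂ hd₁v hd₂v (fun h => hd₂d h.symm) hdom2 with
          ⟨h, -⟩ | ⟨h, -⟩
        · exact hd₁x h
        · exact hd₂x h
  have hr₁C : r₁ ∈ C₁ := hr₁R.1
  have hr₂C : r₂ ∈ C₁ := hr₂R.1
  have hrv₁ : ∀ r ∈ R, r ≠ v₁ := fun r hr => hr.2.1
  have hrx : ∀ r ∈ R, r ≠ x := fun r hr h => hx1 (h ▸ hr.1)
  -- independence of C₂ \ {v₂, v₃}
  have f_zind : ∀ z ∈ C₂, ∀ z' ∈ C₂, z ≠ v₂ → z ≠ v₃ → z' ≠ v₂ → z' ≠ v₃ →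
      z ≠ z' → ¬ G.Adj z z' := by
    intro z hz z' hz' hz2 hz3 hz'2 hz'3 hzz hadjzz
    have hzx : z ≠ x := fun h => hx2 (h ▸ hz)
    have hz'x : z' ≠ x := fun h => hx2 (h ▸ hz')
    have hv₁z : v₁ ≠ z := fun h => hd12 v₁ hv₁C (h ▸ hz)
    have hv₁z' : v₁ ≠ z' := fun h => hd12 v₁ hv₁C (h ▸ hz')
    refine hcritE z z' hadjzz ?_
    refine wins2_of _ v₁ x v₂ v₃ r₁ r₂ hv₁nx hne hr12 hv₁n2 hv₁n3 hv₂x.symm hv₃x.symm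
      (fun h => hrv₁ r₁ hr₁R h.symm) (fun h => hrv₁ r₂ hr₂R h.symm)
      (fun h => hrx r₁ hr₁R h.symm) (fun h => hrx r₂ hr₂R h.symm)
      (surv_pw htri hv₁ hv₂ hadj₂ hv₁z hv₁z' (fun h => hz2 h.symm) (fun h => hz'2 h.symm))
      (surv_pw htri hv₁ hv₃ hadj₃ hv₁z hv₁z' (fun h => hz3 h.symm) (fun h => hz'3 h.symm))
      (dom_pair_comm (surv_xq_C1 hv₁Q hzx hz'x
        (fun h => ((hd12 z (h ▸ hv₁C) hz).elim))
        (fun h => ((hd12 z' (h ▸ hv₁C) hz').elim))))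
      (surv_xq_C1 hr₁R.2.2 hzx hz'x
        (fun h => ((hd12 z (h ▸ hr₁C) hz).elim))
        (fun h => ((hd12 z' (h ▸ hr₁C) hz').elim)))
      (surv_xq_C1 hr₂R.2.2 hzx hz'x
        (fun h => ((hd12 z (h ▸ hr₂C) hz).elim))
        (fun h => ((hd12 z' (h ▸ hr₂C) hz').elim)))
  -- the master "forbidden edge inside C₁" lemma
  have forb : ∀ a b : V, a ∈ C₁ → b ∈ C₁ → a ≠ v₁ → b ≠ v₁ → G.Adj a b →
      ∀ q₁ q₂ : V, q₁ ∈ R → q₂ ∈ R → q₁ ≠ q₂ →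
      (q₁ = a → G.Adj x b) → (q₁ = b → G.Adj x a) →
      (q₂ = a → G.Adj x b) → (q₂ = b → G.Adj x a) → False := by
    intro a b haC hbC hav hbv hab q₁ q₂ hq₁ hq₂ hqq c11 c12 c21 c22
    have hax : a ≠ x := fun h => hx1 (h ▸ haC)
    have hbx : b ≠ x := fun h => hx1 (h ▸ hbC)
    have hv₂a : v₂ ≠ a := fun h => hd12 a haC (h ▸ hv₂C)
    have hv₂b : v₂ ≠ b := fun h => hd12 b hbC (h ▸ hv₂C)
    have hv₃a : v₃ ≠ a := fun h => hd12 a haC (h ▸ hv₃C)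
    have hv₃b : v₃ ≠ b := fun h => hd12 b hbC (h ▸ hv₃C)
    refine hcritE a b hab ?_
    exact wins2_of _ v₁ x v₂ v₃ q₁ q₂ hv₁nx hne hqq hv₁n2 hv₁n3 hv₂x.symm hv₃x.symm
      (fun h => hrv₁ q₁ hq₁ h.symm) (fun h => hrv₁ q₂ hq₂ h.symm)
      (fun h => hrx q₁ hq₁ h.symm) (fun h => hrx q₂ hq₂ h.symm)
      (surv_pw htri hv₁ hv₂ hadj₂ (fun h => hav h.symm) (fun h => hbv h.symm) hv₂a hv₂b)
      (surv_pw htri hv₁ hv₃ hadj₃ (fun h => hav h.symm) (fun h => hbv h.symm) hv₃a hv₃b)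
      (dom_pair_comm (surv_xq_C1 hv₁Q hax hbx
        (fun h => absurd h.symm hav) (fun h => absurd h.symm hbv)))
      (surv_xq_C1 hq₁.2.2 hax hbx c11 c12)
      (surv_xq_C1 hq₂.2.2 hax hbx c21 c22)
  -- g5 : each r ∈ R is adjacent to every non-S vertex of C₁ other than itself
  have g5 : ∀ r ∈ R, ∀ u ∈ C₁, u ≠ r → u ∉ S → G.Adj r u := by
    intro r hr u huC hur huS
    have hux : u ≠ x := fun h => hx1 (h ▸ huC)
    rcases dom_pair_elim hr.2.2 hux hur with h | h
    · exact absurd ⟨huC, h⟩ huS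
    · exact h
  -- g1 : S is independent
  have g1 : ∀ s ∈ S, ∀ s' ∈ S, s ≠ s' → ¬ G.Adj s s' := by
    intro s hs s' hs' hss hadj'
    exact forb s s' hs.1 hs'.1 (fun h => hv₁nS (h ▸ hs)) (fun h => hv₁nS (h ▸ hs'))
      hadj' r₁ r₂ hr₁R hr₂R hr12
      (fun _ => hs'.2) (fun _ => hs.2) (fun _ => hs'.2) (fun _ => hs.2)
  -- g2 : no edges of C₁ − v₁ avoiding R
  have g2 : ∀ a ∈ C₁, ∀ b ∈ C₁, a ≠ v₁ → b ≠ v₁ → a ∉ R → b ∉ R → ¬ G.Adj a b := by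
    intro a haC b hbC hav hbv haR hbR hadj'
    exact forb a b haC hbC hav hbv hadj' r₁ r₂ hr₁R hr₂R hr12
      (fun h => absurd (h ▸ hr₁R) haR) (fun h => absurd (h ▸ hr₁R) hbR)
      (fun h => absurd (h ▸ hr₂R) haR) (fun h => absurd (h ▸ hr₂R) hbR)
  -- g3 : no edges between R and S \ R
  have g3 : ∀ r ∈ R, ∀ s' ∈ S, s' ∉ R → ¬ G.Adj r s' := by
    intro r hr s' hs' hs'R hadj'
    obtain ⟨r', hr', hrr⟩ : ∃ r', r' ∈ R ∧ r' ≠ r := by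
      rcases eq_or_ne r r₁ with rfl | h
      · exact ⟨r₂, hr₂R, fun hh => hr12 hh.symm⟩
      · exact ⟨r₁, hr₁R, fun hh => h hh.symm⟩
    exact forb r s' hr.1 hs'.1 hr.2.1 (fun h => hv₁nS (h ▸ hs')) hadj' r r' hr hr'
      (fun h => hrr h.symm)
      (fun _ => hs'.2) (fun h => absurd (h ▸ hr) hs'R)
      (fun h => absurd h hrr) (fun h => absurd (h ▸ hr') hs'R)
  -- g4 : a vertex of R ∩ S has no neighbours in R
  have g4 : ∀ r ∈ R, r ∈ S → ∀ r' ∈ R, r' ≠ r → ¬ G.Adj r r' := by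
    intro r hr hrS r' hr' hrr hadj'
    refine hcritE x r hrS.2 ?_
    have hv₁r : v₁ ≠ r := fun h => hrv₁ r hr h.symm
    have hv₂r : v₂ ≠ r := fun h => hd12 r hr.1 (h ▸ hv₂C)
    have hv₃r : v₃ ≠ r := fun h => hd12 r hr.1 (h ▸ hv₃C)
    exact wins2_of _ v₁ x v₂ v₃ r r' hv₁nx hne (fun h => hrr h.symm) hv₁n2 hv₁n3
      hv₂x.symm hv₃x.symm
      hv₁r (fun h => hrv₁ r' hr' h.symm)
      (fun h => hrx r hr h.symm) (fun h => hrx r' hr' h.symm)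
      (surv_pw htri hv₁ hv₂ hadj₂ hv₁nx hv₁r hv₂x hv₂r)
      (surv_pw htri hv₁ hv₃ hadj₃ hv₁nx hv₁r hv₃x hv₃r)
      (dom_pair_comm (surv_xq_xc hv₁Q hv₁nx hr.2.1 (hv₁adj r hr.1 hr.2.1)))
      (surv_xq_xq hr.2.2 (hrx r hr))
      (surv_xq_xc hr'.2.2 (hrx r' hr') (fun h => hrr h.symm) hadj'.symm)
  -- the set D of remaining C₁-vertices
  set D : Set V := {d | d ∈ C₁ ∧ d ≠ v₁ ∧ d ∉ S ∧ d ∉ R} with hDdef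
  have hC₁part : ∀ c ∈ C₁, c = v₁ ∨ c ∈ S ∨ c ∈ R ∨ c ∈ D := by
    intro c hc
    by_cases h1 : c = v₁
    · exact Or.inl h1
    by_cases h2 : c ∈ S
    · exact Or.inr (Or.inl h2)
    by_cases h3 : c ∈ R
    · exact Or.inr (Or.inr (Or.inl h3))
    · exact Or.inr (Or.inr (Or.inr ⟨hc, h1, h2, h3⟩))
  -- g7 : if R ∩ S = ∅ then R has no four distinct elements
  have g7 : (∀ r ∈ R, r ∉ S) → ∀ a b c d : V, a ∈ R → b ∈ R → c ∈ R → d ∈ R →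
      a ≠ b → a ≠ c → a ≠ d → b ≠ c → b ≠ d → c ≠ d → False := by
    intro hRS a b c d ha hb hc hd hab hac had hbc hbd hcd
    have hadj' : G.Adj a b := g5 a ha b hb.1 (fun h => hab h.symm) (hRS b hb)
    exact forb a b ha.1 hb.1 ha.2.1 hb.2.1 hadj' c d hc hd hcd
      (fun h => absurd h.symm hac) (fun h => absurd h.symm hbc)
      (fun h => absurd h.symm had) (fun h => absurd h.symm hbd)
  -- g9 : D has no isolated single element
  have g9 : ∀ d ∈ D, ∃ d' ∈ D, d' ≠ d := by
    intro d hd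
    by_contra hno
    push_neg at hno
    have : d ∈ R := by
      refine ⟨hd.1, hd.2.1, dom_pair_of ?_⟩
      intro v hvx hvd
      rcases htri v with rfl | hv | hv
      · exact absurd rfl hvx
      · rcases hC₁part v hv with rfl | hvS | hvR | hvD
        · exact Or.inr (hv₁adj d hd.1 hd.2.1).symm
        · exact Or.inl hvS.2
        · by_cases hvS' : v ∈ S
          · exact Or.inl hvS'.2
          · exact Or.inr (g5 v hvR d hd.1 (fun h => hd.2.2.2 (h ▸ hvR)) hd.2.2.1).symm
        · exact absurd (hno v hvD) hvd
      · exact Or.inl (hC₂N v hv)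
    exact hd.2.2.2 this
  -- if D is nonempty then R = {r₁, r₂}
  have hR2sub : ∀ d ∈ D, ∀ r ∈ R, r = r₁ ∨ r = r₂ := by
    intro d hd r hr
    by_contra hro
    push_neg at hro
    obtain ⟨hrr₁, hrr₂⟩ := hro
    have hdr : d ≠ r := fun h => hd.2.2.2 (h ▸ hr)
    have hadj' : G.Adj r d := g5 r hr d hd.1 hdr hd.2.2.1
    exact forb r d hr.1 hd.1 hr.2.1 hd.2.1 hadj' r₁ r₂ hr₁R hr₂R hr12
      (fun h => absurd h.symm hrr₁) (fun h => absurd (h ▸ hr₁R) hd.2.2.2)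
      (fun h => absurd h.symm hrr₂) (fun h => absurd (h ▸ hr₂R) hd.2.2.2)
  have hWadj : ∀ w : V, (w = v₂ ∨ w = v₃) → ∀ b ∈ C₂, b ≠ w → G.Adj w b := by
    intro w hw b hb hbw
    rcases hw with rfl | rfl
    · exact hv₂.2 b hb hbw
    · exact hv₃.2 b hb hbw
  have hSC₂ : Disjoint S C₂ := Set.disjoint_left.mpr (fun c hc => hd12 c hc.1)
  have hv₁nC₂ : v₁ ∉ C₂ := hd12 v₁ hv₁C
  have hr₁x : r₁ ≠ x := hrx r₁ hr₁R
  have hr₂x : r₂ ≠ x := hrx r₂ hr₂R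
  have hSne' : S.Nonempty := ⟨c₀, hc₀S⟩
  by_cases hRS : ∀ r ∈ R, r ∉ S
  · -- ====== branch B : R ∩ S = ∅, family F ======
    set RD : Set V := R ∪ D with hRDdef
    have hRD_adj : ∀ a : V, (a = r₁ ∨ a = r₂) → ∀ b ∈ RD, b ≠ a → G.Adj a b := by
      intro a haR' b hb hba
      have haR : a ∈ R := by rcases haR' with rfl | rfl; exacts [hr₁R, hr₂R]
      rcases hb with hbR | hbD
      · exact g5 a haR b hbR.1 hba (hRS b hbR)
      · exact g5 a haR b hbD.1 hba hbD.2.2.1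
    have hBcore : ∀ a b : V, G.Adj a b ↔ a ≠ b ∧
        (Phi v₁ x S RD C₂ {r₁, r₂} {v₂, v₃} a b ∨
         Phi v₁ x S RD C₂ {r₁, r₂} {v₂, v₃} b a) := by
      have build : ∀ u w : V, u ≠ w →
          Phi v₁ x S RD C₂ {r₁, r₂} {v₂, v₃} u w → G.Adj u w := by
        intro u w huw hp
        rcases hp with ⟨rfl, hw⟩ | ⟨rfl, hw⟩ | ⟨huR, hwRD⟩ | ⟨huW, hwK⟩
        · rcases hw with hwS | hwRD
          · exact hv₁adj w hwS.1 (fun h => huw h.symm)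
          · rcases hwRD with hwR | hwD
            · exact hv₁adj w hwR.1 (fun h => huw h.symm)
            · exact hv₁adj w hwD.1 (fun h => huw h.symm)
        · rcases hw with hwS | hwK
          · exact hwS.2
          · exact hC₂N w hwK
        · simp only [Set.mem_insert_iff, Set.mem_singleton_iff] at huR
          exact hRD_adj u huR w hwRD (fun h => huw h.symm)
        · simp only [Set.mem_insert_iff, Set.mem_singleton_iff] at huW
          exact hWadj u huW w hwK (fun h => huw h.symm)
      intro a b
      constructor
      · intro hab
        refine ⟨hab.ne, ?_⟩
        rcases htri a with rfl | haC | haC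
        · rcases htri b with rfl | hbC | hbC
          · exact (G.irrefl hab).elim
          · exact Or.inl (Or.inr (Or.inl ⟨rfl, Or.inl ⟨hbC, hab⟩⟩))
          · exact Or.inl (Or.inr (Or.inl ⟨rfl, Or.inr hbC⟩))
        · rcases htri b with rfl | hbC | hbC
          · exact Or.inr (Or.inr (Or.inl ⟨rfl, Or.inl ⟨haC, hab.symm⟩⟩))
          · by_cases hav : a = v₁
            · subst hav
              rcases hC₁part b hbC with rfl | hbS | hbR | hbD
              · exact (G.irrefl hab).elim
              · exact Or.inl (Or.inl ⟨rfl, Or.inl hbS⟩)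
              · exact Or.inl (Or.inl ⟨rfl, Or.inr (Set.mem_union_left _ hbR)⟩)
              · exact Or.inl (Or.inl ⟨rfl, Or.inr (Set.mem_union_right _ hbD)⟩)
            · by_cases hbv : b = v₁
              · subst hbv
                rcases hC₁part a haC with rfl | haS | haR | haD
                · exact (G.irrefl hab).elim
                · exact Or.inr (Or.inl ⟨rfl, Or.inl haS⟩)
                · exact Or.inr (Or.inl ⟨rfl, Or.inr (Set.mem_union_left _ haR)⟩)
                · exact Or.inr (Or.inl ⟨rfl, Or.inr (Set.mem_union_right _ haD)⟩)
              · by_cases haR : a ∈ R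
                · by_cases hbR : b ∈ R
                  · by_cases ha12 : a = r₁ ∨ a = r₂
                    · exact Or.inl (Or.inr (Or.inr (Or.inl
                        ⟨by simpa using ha12, Set.mem_union_left _ hbR⟩)))
                    · by_cases hb12 : b = r₁ ∨ b = r₂
                      · exact Or.inr (Or.inr (Or.inr (Or.inl
                          ⟨by simpa using hb12, Set.mem_union_left _ haR⟩)))
                      · push_neg at ha12 hb12
                        exact (g7 hRS r₁ r₂ a b hr₁R hr₂R haR hbR hr12
                          (fun h => ha12.1 h.symm) (fun h => hb12.1 h.symm)
                          (fun h => ha12.2 h.symm) (fun h => hb12.2 h.symm)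
                          hab.ne).elim
                  · by_cases hbS : b ∈ S
                    · exact (g3 a haR b hbS hbR hab).elim
                    · have hbD : b ∈ D := ⟨hbC, hbv, hbS, hbR⟩
                      have ha12 : a = r₁ ∨ a = r₂ := hR2sub b hbD a haR
                      exact Or.inl (Or.inr (Or.inr (Or.inl
                        ⟨by simpa using ha12, Set.mem_union_right _ hbD⟩)))
                · by_cases hbR : b ∈ R
                  · by_cases haS : a ∈ S
                    · exact (g3 b hbR a haS haR hab.symm).elim
                    · have haD : a ∈ D := ⟨haC, hav, haS, haR⟩
                      have hb12 : b = r₁ ∨ b = r₂ := hR2sub a haD b hbR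
                      exact Or.inr (Or.inr (Or.inr (Or.inl
                        ⟨by simpa using hb12, Set.mem_union_right _ haD⟩)))
                  · exact (g2 a haC b hbC hav hbv haR hbR hab).elim
          · exact (hcross a haC b hbC hab).elim
        · rcases htri b with rfl | hbC | hbC
          · exact Or.inr (Or.inr (Or.inl ⟨rfl, Or.inr haC⟩))
          · exact (hcross b hbC a haC hab.symm).elim
          · by_cases ha2 : a = v₂ ∨ a = v₃
            · exact Or.inl (Or.inr (Or.inr (Or.inr ⟨by simpa using ha2, hbC⟩)))
            · by_cases hb2 : b = v₂ ∨ b = v₃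
              · exact Or.inr (Or.inr (Or.inr (Or.inr ⟨by simpa using hb2, haC⟩)))
              · push_neg at ha2 hb2
                exact (f_zind a haC b hbC ha2.1 ha2.2 hb2.1 hb2.2 hab.ne hab).elim
      · rintro ⟨hne', hφ⟩
        rcases hφ with h | h
        · exact build a b hne' h
        · exact (build b a (fun hh => hne' hh.symm) h).symm
    -- apply iso_F (possibly with the two sides swapped)
    have hv₁RD : v₁ ∉ RD := by
      rintro (h | h)
      · exact h.2.1 rfl
      · exact h.2.1 rfl
    have hxRD : x ∉ RD := by
      rintro (h | h)
      · exact hx1 h.1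
      · exact hx1 h.1
    have hxC₂ : x ∉ C₂ := hx2
    have hSRD : Disjoint S RD := by
      rw [Set.disjoint_left]
      rintro c hcS (hcR | hcD)
      · exact hRS c hcR hcS
      · exact hcD.2.2.1 hcS
    have hRDC₂ : Disjoint RD C₂ := by
      rw [Set.disjoint_left]
      rintro c (hcR | hcD) hc2
      · exact hd12 c hcR.1 hc2
      · exact hd12 c hcD.1 hc2
    have hcov : ∀ v : V, v = v₁ ∨ v = x ∨ v ∈ S ∨ v ∈ RD ∨ v ∈ C₂ := by
      intro v
      rcases htri v with rfl | hv | hv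
      · exact Or.inr (Or.inl rfl)
      · rcases hC₁part v hv with rfl | hvS | hvR | hvD
        · exact Or.inl rfl
        · exact Or.inr (Or.inr (Or.inl hvS))
        · exact Or.inr (Or.inr (Or.inr (Or.inl (Set.mem_union_left _ hvR))))
        · exact Or.inr (Or.inr (Or.inr (Or.inl (Set.mem_union_right _ hvD))))
      · exact Or.inr (Or.inr (Or.inr (Or.inr hv)))
    have hRsub : ({r₁, r₂} : Set V) ⊆ RD := by
      rintro c (rfl | hc)
      · exact Set.mem_union_left _ hr₁R
      · rw [Set.mem_singleton_iff] at hc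
        subst hc
        exact Set.mem_union_left _ hr₂R
    have hWsub : ({v₂, v₃} : Set V) ⊆ C₂ := by
      rintro c (rfl | hc)
      · exact hv₂C
      · rw [Set.mem_singleton_iff] at hc
        subst hc
        exact hv₃C
    have hS2 : RD = ∅ → ∃ s₁ s₂, s₁ ∈ S ∧ s₂ ∈ S ∧ s₁ ≠ s₂ := by
      intro h
      exact absurd (h ▸ Set.mem_union_left D hr₁R) (Set.notMem_empty r₁)
    rcases le_total RD.ncard C₂.ncard with hord | hord
    · exact Or.inl (iso_F G v₁ x S RD C₂ {r₁, r₂} {v₂, v₃} hv₁nx hv₁nS hv₁RD hv₁nC₂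
        (fun h => hx1 h.1) hxRD hxC₂ hSRD hSC₂ hRDC₂ hcov hRsub hWsub hBcore
        (Or.inr ⟨r₁, r₂, hr12, rfl⟩) ⟨v₂, v₃, hne, rfl⟩ hSne' hS2 hord)
    · have phiswap : ∀ a b : V, Phi x v₁ S C₂ RD {v₂, v₃} {r₁, r₂} a b ↔
          Phi v₁ x S RD C₂ {r₁, r₂} {v₂, v₃} a b := by
        intro a b
        simp only [Phi]
        constructor
        · rintro (h | h | h | h)
          exacts [Or.inr (Or.inl h), Or.inl h, Or.inr (Or.inr (Or.inr h)),
            Or.inr (Or.inr (Or.inl h))]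
        · rintro (h | h | h | h)
          exacts [Or.inr (Or.inl h), Or.inl h, Or.inr (Or.inr (Or.inr h)),
            Or.inr (Or.inr (Or.inl h))]
      have hadj' : ∀ a b : V, G.Adj a b ↔ a ≠ b ∧
          (Phi x v₁ S C₂ RD {v₂, v₃} {r₁, r₂} a b ∨
           Phi x v₁ S C₂ RD {v₂, v₃} {r₁, r₂} b a) := fun a b =>
        (hBcore a b).trans (and_congr_right fun _ =>
          or_congr (phiswap a b).symm (phiswap b a).symm)
      exact Or.inl (iso_F G x v₁ S C₂ RD {v₂, v₃} {r₁, r₂} (fun h => hv₁nx h.symm)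
        (fun h => hx1 h.1) hxC₂ hxRD hv₁nS hv₁nC₂ hv₁RD hSC₂ hSRD
        hRDC₂.symm
        (fun v => by
          rcases hcov v with h | h | h | h | h
          exacts [Or.inr (Or.inl h), Or.inl h, Or.inr (Or.inr (Or.inl h)),
            Or.inr (Or.inr (Or.inr (Or.inr h))), Or.inr (Or.inr (Or.inr (Or.inl h)))])
        hWsub hRsub hadj' (Or.inr ⟨v₂, v₃, hne, rfl⟩) ⟨r₁, r₂, hr12, rfl⟩ hSne'
        (fun h => absurd (h ▸ hv₂C) (Set.notMem_empty v₂)) hord)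
  · -- ====== branch A : R ∩ S ≠ ∅ ======
    push_neg at hRS
    have hWsub : ({v₂, v₃} : Set V) ⊆ C₂ := by
      rintro c (rfl | hc)
      · exact hv₂C
      · rw [Set.mem_singleton_iff] at hc
        subst hc
        exact hv₃C
    obtain ⟨r₀, hr₀R, hr₀S⟩ := hRS
    have hRsubS : ∀ r ∈ R, r ∈ S := by
      intro r hr
      by_contra hrS
      by_cases hrr : r = r₀
      · exact hrS (hrr ▸ hr₀S)
      · exact g4 r₀ hr₀R hr₀S r hr (fun h => hrr h) (g5 r₀ hr₀R r hr.1 hrr hrS)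
    by_cases hDne : ∃ d, d ∈ D
    · -- family F'
      obtain ⟨d₀, hd₀⟩ := hDne
      have hReq : ∀ r ∈ R, r = r₁ ∨ r = r₂ := hR2sub d₀ hd₀
      have hr₁S : r₁ ∈ S := hRsubS r₁ hr₁R
      have hr₂S : r₂ ∈ S := hRsubS r₂ hr₂R
      set S' : Set V := S \ {r₁, r₂} with hS'def
      have build : ∀ u w : V, u ≠ w →
          Phi' v₁ x r₁ r₂ D S' C₂ {v₂, v₃} u w → G.Adj u w := by
        intro u w huw hp
        rcases hp with ⟨hu, hwD⟩ | ⟨rfl, hw⟩ | ⟨huW, hwK⟩ | ⟨rfl, hw⟩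
        · have huR : u ∈ R := by rcases hu with rfl | rfl; exacts [hr₁R, hr₂R]
          exact g5 u huR w hwD.1 (fun h => huw h.symm) hwD.2.2.1
        · rcases hw with h1 | h1 | hwD | hwS'
          · rw [h1]; exact hv₁adj r₁ hr₁C (hrv₁ r₁ hr₁R)
          · rw [h1]; exact hv₁adj r₂ hr₂C (hrv₁ r₂ hr₂R)
          · exact hv₁adj w hwD.1 (fun h => huw h.symm)
          · exact hv₁adj w hwS'.1.1 (fun h => huw h.symm)
        · simp only [Set.mem_insert_iff, Set.mem_singleton_iff] at huW
          exact hWadj u huW w hwK (fun h => huw h.symm)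
        · rcases hw with h1 | h1 | hwS' | hwK
          · rw [h1]; exact hr₁S.2
          · rw [h1]; exact hr₂S.2
          · exact hwS'.1.2
          · exact hC₂N w hwK
      have hsplitS : ∀ c ∈ S, c = r₁ ∨ c = r₂ ∨ c ∈ S' := by
        intro c hc
        by_cases h1 : c = r₁
        · exact Or.inl h1
        by_cases h2 : c = r₂
        · exact Or.inr (Or.inl h2)
        · exact Or.inr (Or.inr ⟨hc, by simp [h1, h2]⟩)
      have hadjA2 : ∀ u w : V, G.Adj u w ↔ u ≠ w ∧
          (Phi' v₁ x r₁ r₂ D S' C₂ {v₂, v₃} u w ∨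
           Phi' v₁ x r₁ r₂ D S' C₂ {v₂, v₃} w u) := by
        intro a b
        constructor
        · intro hab
          refine ⟨hab.ne, ?_⟩
          rcases htri a with rfl | haC | haC
          · rcases htri b with rfl | hbC | hbC
            · exact (G.irrefl hab).elim
            · have hbS : b ∈ S := ⟨hbC, hab⟩
              rcases hsplitS b hbS with rfl | rfl | hbS'
              · exact Or.inl (Or.inr (Or.inr (Or.inr ⟨rfl, Or.inl rfl⟩)))
              · exact Or.inl (Or.inr (Or.inr (Or.inr ⟨rfl, Or.inr (Or.inl rfl)⟩)))
              · exact Or.inl (Or.inr (Or.inr (Or.inr ⟨rfl,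
                  Or.inr (Or.inr (Or.inl hbS'))⟩)))
            · exact Or.inl (Or.inr (Or.inr (Or.inr ⟨rfl,
                Or.inr (Or.inr (Or.inr hbC))⟩)))
          · rcases htri b with rfl | hbC | hbC
            · have haS : a ∈ S := ⟨haC, hab.symm⟩
              rcases hsplitS a haS with rfl | rfl | haS'
              · exact Or.inr (Or.inr (Or.inr (Or.inr ⟨rfl, Or.inl rfl⟩)))
              · exact Or.inr (Or.inr (Or.inr (Or.inr ⟨rfl, Or.inr (Or.inl rfl)⟩)))
              · exact Or.inr (Or.inr (Or.inr (Or.inr ⟨rfl,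
                  Or.inr (Or.inr (Or.inl haS'))⟩)))
            · by_cases hav : a = v₁
              · subst hav
                rcases hC₁part b hbC with rfl | hbS | hbR | hbD
                · exact (G.irrefl hab).elim
                · rcases hsplitS b hbS with rfl | rfl | hbS'
                  · exact Or.inl (Or.inr (Or.inl ⟨rfl, Or.inl rfl⟩))
                  · exact Or.inl (Or.inr (Or.inl ⟨rfl, Or.inr (Or.inl rfl)⟩))
                  · exact Or.inl (Or.inr (Or.inl ⟨rfl,
                      Or.inr (Or.inr (Or.inr hbS'))⟩))
                · rcases hReq b hbR with rfl | rfl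
                  · exact Or.inl (Or.inr (Or.inl ⟨rfl, Or.inl rfl⟩))
                  · exact Or.inl (Or.inr (Or.inl ⟨rfl, Or.inr (Or.inl rfl)⟩))
                · exact Or.inl (Or.inr (Or.inl ⟨rfl, Or.inr (Or.inr (Or.inl hbD))⟩))
              · by_cases hbv : b = v₁
                · subst hbv
                  rcases hC₁part a haC with rfl | haS | haR | haD
                  · exact (G.irrefl hab).elim
                  · rcases hsplitS a haS with rfl | rfl | haS'
                    · exact Or.inr (Or.inr (Or.inl ⟨rfl, Or.inl rfl⟩))
                    · exact Or.inr (Or.inr (Or.inl ⟨rfl, Or.inr (Or.inl rfl)⟩))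
                    · exact Or.inr (Or.inr (Or.inl ⟨rfl,
                        Or.inr (Or.inr (Or.inr haS'))⟩))
                  · rcases hReq a haR with rfl | rfl
                    · exact Or.inr (Or.inr (Or.inl ⟨rfl, Or.inl rfl⟩))
                    · exact Or.inr (Or.inr (Or.inl ⟨rfl, Or.inr (Or.inl rfl)⟩))
                  · exact Or.inr (Or.inr (Or.inl ⟨rfl,
                      Or.inr (Or.inr (Or.inl haD))⟩))
                · by_cases haR : a ∈ R
                  · by_cases hbR : b ∈ R
                    · exact (g4 a haR (hRsubS a haR) b hbR
                        (fun h => hab.ne h.symm) hab).elim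
                    · by_cases hbS : b ∈ S
                      · exact (g3 a haR b hbS hbR hab).elim
                      · exact Or.inl (Or.inl ⟨hReq a haR, ⟨hbC, hbv, hbS, hbR⟩⟩)
                  · by_cases hbR : b ∈ R
                    · by_cases haS : a ∈ S
                      · exact (g3 b hbR a haS haR hab.symm).elim
                      · exact Or.inr (Or.inl ⟨hReq b hbR, ⟨haC, hav, haS, haR⟩⟩)
                    · exact (g2 a haC b hbC hav hbv haR hbR hab).elim
            · exact (hcross a haC b hbC hab).elim
          · rcases htri b with rfl | hbC | hbC
            · exact Or.inr (Or.inr (Or.inr (Or.inr ⟨rfl,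
                Or.inr (Or.inr (Or.inr haC))⟩)))
            · exact (hcross b hbC a haC hab.symm).elim
            · by_cases ha2 : a = v₂ ∨ a = v₃
              · exact Or.inl (Or.inr (Or.inr (Or.inl ⟨by simpa using ha2, hbC⟩)))
              · by_cases hb2 : b = v₂ ∨ b = v₃
                · exact Or.inr (Or.inr (Or.inr (Or.inl ⟨by simpa using hb2, haC⟩)))
                · push_neg at ha2 hb2
                  exact (f_zind a haC b hbC ha2.1 ha2.2 hb2.1 hb2.2 hab.ne hab).elim
        · rintro ⟨hne', hφ⟩
          rcases hφ with h | h
          · exact build a b hne' h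
          · exact (build b a (fun hh => hne' hh.symm) h).symm
      have hr₁v : r₁ ≠ v₁ := hrv₁ r₁ hr₁R
      have hr₂v : r₂ ≠ v₁ := hrv₁ r₂ hr₂R
      have hcovA2 : ∀ v : V, v = v₁ ∨ v = x ∨ v = r₁ ∨ v = r₂ ∨ v ∈ D ∨ v ∈ S' ∨
          v ∈ C₂ := by
        intro v
        rcases htri v with rfl | hv | hv
        · exact Or.inr (Or.inl rfl)
        · rcases hC₁part v hv with rfl | hvS | hvR | hvD
          · exact Or.inl rfl
          · rcases hsplitS v hvS with rfl | rfl | hvS'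
            · exact Or.inr (Or.inr (Or.inl rfl))
            · exact Or.inr (Or.inr (Or.inr (Or.inl rfl)))
            · exact Or.inr (Or.inr (Or.inr (Or.inr (Or.inr (Or.inl hvS')))))
          · rcases hReq v hvR with rfl | rfl
            · exact Or.inr (Or.inr (Or.inl rfl))
            · exact Or.inr (Or.inr (Or.inr (Or.inl rfl)))
          · exact Or.inr (Or.inr (Or.inr (Or.inr (Or.inl hvD))))
        · exact Or.inr (Or.inr (Or.inr (Or.inr (Or.inr (Or.inr hv)))))
      obtain ⟨d', hd', hdd⟩ := g9 d₀ hd₀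
      obtain ⟨s, q, m, hs, hq, hm, hiso⟩ := iso_F' G v₁ x r₁ r₂ D S' C₂ {v₂, v₃}
        hv₁nx hr12 hr₁v hr₁x hr₂v hr₂x
        (fun h => h.2.2.2 hr₁R) (fun h => h.2 (Set.mem_insert _ _))
        (fun h => hd12 r₁ hr₁C h)
        (fun h => h.2.2.2 hr₂R)
        (fun h => h.2 (Set.mem_insert_of_mem _ (Set.mem_singleton _)))
        (fun h => hd12 r₂ hr₂C h)
        (fun h => h.2.1 rfl) (fun h => hv₁nS h.1) hv₁nC₂
        (fun h => hx1 h.1) (fun h => hx1 h.1.1) hx2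
        (Set.disjoint_left.mpr (fun d hd hdS' => hd.2.2.1 hdS'.1))
        (Set.disjoint_left.mpr (fun d hd hdK => hd12 d hd.1 hdK))
        (Set.disjoint_left.mpr (fun c hc hcK => hd12 c hc.1.1 hcK))
        hWsub hcovA2 hadjA2 ⟨v₂, v₃, hne, rfl⟩ ⟨d', d₀, hd', hd₀, hdd⟩
      exact Or.inr ⟨s, q, m, hs, hq, hm, hiso⟩
    · -- star case : family F with m₁ = 0
      have hC₁S : ∀ c ∈ C₁, c ≠ v₁ → c ∈ S := by
        intro c hc hcv
        rcases hC₁part c hc with rfl | hcS | hcR | hcD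
        · exact absurd rfl hcv
        · exact hcS
        · exact hRsubS c hcR
        · exact absurd ⟨c, hcD⟩ hDne
      have build : ∀ u w : V, u ≠ w →
          Phi v₁ x S (∅ : Set V) C₂ (∅ : Set V) {v₂, v₃} u w → G.Adj u w := by
        intro u w huw hp
        rcases hp with ⟨rfl, hw⟩ | ⟨rfl, hw⟩ | ⟨huR, -⟩ | ⟨huW, hwK⟩
        · rcases hw with hwS | hwRD
          · exact hv₁adj w hwS.1 (fun h => huw h.symm)
          · exact hwRD.elim
        · rcases hw with hwS | hwK
          · exact hwS.2
          · exact hC₂N w hwK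
        · exact huR.elim
        · simp only [Set.mem_insert_iff, Set.mem_singleton_iff] at huW
          exact hWadj u huW w hwK (fun h => huw h.symm)
      have hadjA1 : ∀ u w : V, G.Adj u w ↔ u ≠ w ∧
          (Phi v₁ x S (∅ : Set V) C₂ (∅ : Set V) {v₂, v₃} u w ∨
           Phi v₁ x S (∅ : Set V) C₂ (∅ : Set V) {v₂, v₃} w u) := by
        intro a b
        constructor
        · intro hab
          refine ⟨hab.ne, ?_⟩
          rcases htri a with rfl | haC | haC
          · rcases htri b with rfl | hbC | hbC
            · exact (G.irrefl hab).elim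
            · exact Or.inl (Or.inr (Or.inl ⟨rfl, Or.inl ⟨hbC, hab⟩⟩))
            · exact Or.inl (Or.inr (Or.inl ⟨rfl, Or.inr hbC⟩))
          · rcases htri b with rfl | hbC | hbC
            · exact Or.inr (Or.inr (Or.inl ⟨rfl, Or.inl ⟨haC, hab.symm⟩⟩))
            · by_cases hav : a = v₁
              · subst hav
                have hbv : b ≠ a := fun h => G.irrefl (h ▸ hab)
                exact Or.inl (Or.inl ⟨rfl, Or.inl (hC₁S b hbC hbv)⟩)
              · by_cases hbv : b = v₁
                · subst hbv
                  exact Or.inr (Or.inl ⟨rfl, Or.inl (hC₁S a haC hav)⟩)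
                · exact (g1 a (hC₁S a haC hav) b (hC₁S b hbC hbv) hab.ne hab).elim
            · exact (hcross a haC b hbC hab).elim
          · rcases htri b with rfl | hbC | hbC
            · exact Or.inr (Or.inr (Or.inl ⟨rfl, Or.inr haC⟩))
            · exact (hcross b hbC a haC hab.symm).elim
            · by_cases ha2 : a = v₂ ∨ a = v₃
              · exact Or.inl (Or.inr (Or.inr (Or.inr ⟨by simpa using ha2, hbC⟩)))
              · by_cases hb2 : b = v₂ ∨ b = v₃
                · exact Or.inr (Or.inr (Or.inr (Or.inr ⟨by simpa using hb2, haC⟩)))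
                · push_neg at ha2 hb2
                  exact (f_zind a haC b hbC ha2.1 ha2.2 hb2.1 hb2.2 hab.ne hab).elim
        · rintro ⟨hne', hφ⟩
          rcases hφ with h | h
          · exact build a b hne' h
          · exact (build b a (fun hh => hne' hh.symm) h).symm
      have hcovA1 : ∀ v : V, v = v₁ ∨ v = x ∨ v ∈ S ∨ v ∈ (∅ : Set V) ∨ v ∈ C₂ := by
        intro v
        rcases htri v with rfl | hv | hv
        · exact Or.inr (Or.inl rfl)
        · by_cases hvv : v = v₁
          · exact Or.inl hvv
          · exact Or.inr (Or.inr (Or.inl (hC₁S v hv hvv)))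
        · exact Or.inr (Or.inr (Or.inr (Or.inr hv)))
      exact Or.inl (iso_F G v₁ x S ∅ C₂ ∅ {v₂, v₃} hv₁nx hv₁nS (Set.notMem_empty _)
        hv₁nC₂ (fun h => hx1 h.1) (Set.notMem_empty _) hx2
        (Set.disjoint_right.mpr (fun c h => (Set.notMem_empty c h).elim))
        hSC₂ (Set.disjoint_left.mpr (fun c h => (Set.notMem_empty c h).elim))
        hcovA1 (fun c h => h) hWsub hadjA1 (Or.inl ⟨rfl, rfl⟩) ⟨v₂, v₃, hne, rfl⟩
        hSne' (fun _ => ⟨r₁, r₂, hRsubS r₁ hr₁R, hRsubS r₂ hr₂R, hr12⟩)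
        (by simp [Set.ncard_empty]))
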